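/- arXiv:1301.6531 — 3 statements merged into one kernel-verified Lean document; each statement's English description precedes it below -/
import Mathlib

section
/- Let M be a map and let E0 be an edge of M both of whose extremities are leaves. Then E0 is straight, and M \ E0 has two fewer vertices, one fewer edge, one fewer face, and one fewer connected component than M; consequently d(M \ E0) = d(M). -/
open Equiv Polynomial

open scoped Classical

noncomputable section

variable {α : Type*}

/-- `f` is a *pairing* of the finite set `S`: an involution of the ambient type which
moves exactly the elements of `S` (i.e., a fixpoint-free involution of `S`, extended by
the identity outside of `S`); the pairs of the pairing are the orbits `{a, f a}`. -/
def IsPairing (S : Finset α) (f : Equiv.Perm α) : Prop :=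
  (∀ a, f (f a) = a) ∧ ∀ a, f a ≠ a ↔ a ∈ S

/-- The pairing `P_{{s₁,s₂}}` obtained from the pairing `f` by removing the elements
`s₁, s₂` : if `{s₁,s₂}` is a pair of `f` it is simply deleted; otherwise the pairs
containing `s₁` and `s₂` are deleted and the partners `f s₁`, `f s₂` are matched
together. -/
def removeP (f : Equiv.Perm α) (s₁ s₂ : α) : Equiv.Perm α :=
  Equiv.swap s₁ s₂ * Equiv.swap s₁ (f s₂) * Equiv.swap s₂ (f s₁) * f

/-- `t` lies in the polygon of `L(b,w)` containing `s`, in *even position* with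
respect to `s`: `t` is obtained from `s` by an odd alternating word in the
involutions `b` and `w`. -/
def EvenPos (b w : Equiv.Perm α) (s t : α) : Prop :=
  ∃ j : ℤ, t = ((w * b) ^ j * b) s

/-- `t` lies in the polygon of `L(b,w)` containing `s`, in *odd position* with respect
to `s`: `t` is obtained from `s` by an even alternating word in the involutions
`b` and `w`. -/
def OddPos (b w : Equiv.Perm α) (s t : α) : Prop :=
  ∃ j : ℤ, t = ((w * b) ^ j) s

/-- `s` and `t` lie in the same polygon of `L(b,w)`. -/
def SameFace (b w : Equiv.Perm α) (s t : α) : Prop :=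
  EvenPos b w s t ∨ OddPos b w s t

/-- The edge `{s,t}` is *straight*: both edge-sides lie in the same face,
in even position. -/
def IsStraight (b w : Equiv.Perm α) (s t : α) : Prop :=
  SameFace b w s t ∧ EvenPos b w s t

/-- The edge `{s,t}` is *twisted*: both edge-sides lie in the same face,
in odd position. -/
def IsTwisted (b w : Equiv.Perm α) (s t : α) : Prop :=
  SameFace b w s t ∧ OddPos b w s t

/-- The edge `{s,t}` is an *interface* edge: its edge-sides lie in two
different faces. -/
def IsInterface (b w : Equiv.Perm α) (s t : α) : Prop :=
  ¬ SameFace b w s t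

/-- The polygon (face) of `L(b,w)` containing `s`, as the set of its edge-sides. -/
def faceOf (S : Finset α) (b w : Equiv.Perm α) (s : α) : Finset α :=
  S.filter (SameFace b w s)

/-- The collection of polygons (faces) of `L(b,w)`. -/
def faces (S : Finset α) (b w : Equiv.Perm α) : Finset (Finset α) :=
  S.image (faceOf S b w)

/-- The number of polygons (faces) of `L(b,w)`. -/
def numFaces (S : Finset α) (b w : Equiv.Perm α) : ℕ :=
  (faces S b w).card

/-- The *type* of the couple of pairings `(b,w)`: the multiset of half-lengths of the
polygons of `L(b,w)`. -/
def faceType (S : Finset α) (b w : Equiv.Perm α) : Multiset ℕ :=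
  (faces S b w).val.map fun F => F.card / 2

/-- `s` and `t` lie in the same connected component of the map `(b,w,e)`:
`t` is obtained from `s` by applying partner maps in `b`, `w`, `e` repeatedly. -/
def SameComponent (b w e : Equiv.Perm α) (s t : α) : Prop :=
  ∃ g ∈ Subgroup.closure ({b, w, e} : Set (Equiv.Perm α)), g s = t

/-- The number of connected components of the map `(S, b, w, e)`. -/
def numComponents (S : Finset α) (b w e : Equiv.Perm α) : ℕ :=
  (S.image fun s => S.filter (SameComponent b w e s)).card

/-- The number of vertices of the map `(S, b, w, e)`: black vertices are the polygons
of `L(b,e)`, white vertices are the polygons of `L(w,e)`. -/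
def numVertices (S : Finset α) (b w e : Equiv.Perm α) : ℕ :=
  numFaces S b e + numFaces S w e

/-- The number of edges of a map with edge-side set `S`. -/
def numEdges (S : Finset α) : ℕ := S.card / 2

/-- The Euler characteristic `χ(M) = |V(M)| - |E(M)| + |F(M)|` of the map
`M = (S, b, w, e)`. -/
def eulerChar (S : Finset α) (b w e : Equiv.Perm α) : ℤ :=
  (numVertices S b w e : ℤ) - (numEdges S : ℤ) + (numFaces S b w : ℤ)

/-- The quantity `d(M) = 2·(number of connected components of M) - χ(M)`. -/
def dInv (S : Finset α) (b w e : Equiv.Perm α) : ℤ :=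
  2 * (numComponents S b w e : ℤ) - eulerChar S b w e

/-- The edge `{s, e s}` of the map `(b, w, e)` is a *bridge*: either one of its
extremities is a leaf (the pair belongs to `b` or to `w` as well), or its two
extremities lie in different connected components of the map with this edge removed. -/
def IsBridge (b w e : Equiv.Perm α) (s : α) : Prop :=
  (b s = e s ∨ w s = e s) ∨
    ¬ SameComponent (removeP b s (e s)) (removeP w s (e s)) (removeP e s (e s))
        (b s) (w s)

/-- The weight of the edge `{s,t}` in the map with face structure given by `(b,w)`,
as a polynomial in the variable `γ` (over `ℚ`): `1` for a straight edge, `γ` for a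
twisted edge, `1/2` for an interface edge. -/
def edgeWeight (b w : Equiv.Perm α) (s t : α) : Polynomial ℚ :=
  if IsStraight b w s t then 1
  else if IsTwisted b w s t then Polynomial.X
  else Polynomial.C (1 / 2)

/-- The weight `w_{M,≺}` of a map `(b,w,e)` equipped with a history, the latter
encoded as the list of the edges in increasing order (each edge represented by one
of its edge-sides): the product of the weights of the edges, each weight being
computed in the map in which all previous edges have already been removed. -/
def histWeight : Equiv.Perm α → Equiv.Perm α → Equiv.Perm α → List α → Polynomial ℚ
  | _, _, _, [] => 1
  | b, w, e, s :: L =>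
      edgeWeight b w s (e s) *
        histWeight (removeP b s (e s)) (removeP w s (e s)) (removeP e s (e s)) L

/-- `L` encodes a *history* (a linear order on the edges) of the map with edge-side
set `S` and edge pairing `e`: it lists every edge exactly once, each edge being
represented by its smaller edge-side. -/
def IsHistory [LinearOrder α] (S : Finset α) (e : Equiv.Perm α) (L : List α) : Prop :=
  L.Nodup ∧ (∀ s ∈ L, s ∈ S ∧ s < e s) ∧ ∀ a ∈ S, a ∈ L ∨ e a ∈ L

/-- The *measure of non-orientability* `w_M` of the map `(S,b,w,e)`: the average of
`w_{M,≺}` over all `n!` histories `≺`, as a polynomial in the variable `γ` over `ℚ`. -/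
def mapWeight [LinearOrder α] (S : Finset α) (b w e : Equiv.Perm α) : Polynomial ℚ :=
  Polynomial.C (1 / ((numEdges S).factorial : ℚ)) *
    ∑ F ∈ (Fintype.piFinset fun _ : Fin (numEdges S) => S).filter
        (fun F => IsHistory S e (List.ofFn F)),
      histWeight b w e (List.ofFn F)

/-- The number of embeddings `N_M(λ)` of the underlying bipartite graph of the map
`(S,b,w,e)` into the Young diagram whose list of row lengths is `lam`: an embedding
maps black vertices (polygons of `L(b,e)`) to rows, white vertices (polygons of
`L(w,e)`) to columns, and each edge to the box at the corresponding intersection;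
it is encoded by a pair of functions on edge-sides that are constant on vertices. -/
def NMap (lam : List ℕ) (S : Finset α) (b w e : Equiv.Perm α) : ℕ :=
  Nat.card {fp : (α → ℕ) × (α → ℕ) //
    (∀ s, s ∉ S → fp.1 s = 0 ∧ fp.2 s = 0) ∧
    (∀ s ∈ S, fp.1 (b s) = fp.1 s ∧ fp.1 (e s) = fp.1 s) ∧
    (∀ s ∈ S, fp.2 (w s) = fp.2 s ∧ fp.2 (e s) = fp.2 s) ∧
    ∀ s ∈ S, fp.2 s < lam.getD (fp.1 s) 0}

/-- The orientability generating series `\widehat{Ch}^{(α)}_π(λ)`, where the face-type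
`π` is realized by the fixed couple of pairings `(b,w)` of `S`, `lam` is the list of
row lengths of the Young diagram `λ`, and `a` is the Jack parameter `α`: the sum over
all pairings `e` of `S` (i.e., over all maps of face-type `π`) of
`(-1/√α)^{|V_•(M)|} (√α)^{|V_∘(M)|} w_M N_M(λ)`, times the sign `(-1)^{ℓ(π)}`,
where `w_M` is evaluated at `γ = (1-α)/√α`. -/
def genSeries [Fintype α] [LinearOrder α] (lam : List ℕ) (S : Finset α)
    (b w : Equiv.Perm α) (a : ℝ) : ℝ :=
  (-1 : ℝ) ^ numFaces S b w *
    ∑ e ∈ Finset.univ.filter fun e : Equiv.Perm α => IsPairing S e,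
      (-1 / Real.sqrt a) ^ numFaces S b e * (Real.sqrt a) ^ numFaces S w e *
        Polynomial.aeval ((1 - a) / Real.sqrt a) (mapWeight S b w e) *
          (NMap lam S b w e : ℝ)

/-- The number of embeddings `N_G(λ)` of the bipartite graph `G` with black vertex set
`ι`, white vertex set `κ` and edge relation `Edg` into the Young diagram whose list of
row lengths is `lam`: black vertices are mapped to rows of `λ`, white vertices to
columns of `λ`, and every edge to the box at the corresponding intersection, which
must belong to `λ`. -/
def NGraph {ι κ : Type*} (lam : List ℕ) (Edg : ι → κ → Prop) : ℕ :=
  Nat.card {fp : (ι → ℕ) × (κ → ℕ) //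
    (∀ u, 0 < lam.getD (fp.1 u) 0) ∧
    (∀ v, ∃ i, fp.2 v < lam.getD i 0) ∧
    ∀ u v, Edg u v → fp.2 v < lam.getD (fp.1 u) 0}


section RemoveEdgeAux

variable {s t : α}

/-- Auxiliary: `g` preserves the pair `{s,t}` and agrees with `g'` outside it. -/
def Good (s t : α) (g g' : Equiv.Perm α) : Prop :=
  (g s = s ∨ g s = t) ∧ (g t = s ∨ g t = t) ∧
    ∀ y, y ≠ s → y ≠ t → g y ≠ s ∧ g y ≠ t ∧ g y = g' y

lemma good_one (s t : α) : Good s t 1 1 :=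
  ⟨Or.inl rfl, Or.inr rfl, fun _ h1 h2 => ⟨h1, h2, rfl⟩⟩

lemma good_mul {g g' h h' : Equiv.Perm α}
    (hg : Good s t g g') (hh : Good s t h h') : Good s t (g * h) (g' * h') := by
  obtain ⟨hg1, hg2, hg3⟩ := hg
  obtain ⟨hh1, hh2, hh3⟩ := hh
  refine ⟨?_, ?_, fun y hy1 hy2 => ?_⟩
  · rw [Equiv.Perm.mul_apply]
    rcases hh1 with h | h <;> rw [h]
    · exact hg1
    · exact hg2
  · rw [Equiv.Perm.mul_apply]
    rcases hh2 with h | h <;> rw [h]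
    · exact hg1
    · exact hg2
  · obtain ⟨h1, h2, h3⟩ := hh3 y hy1 hy2
    obtain ⟨k1, k2, k3⟩ := hg3 _ h1 h2
    refine ⟨?_, ?_, ?_⟩
    · rw [Equiv.Perm.mul_apply]; exact k1
    · rw [Equiv.Perm.mul_apply]; exact k2
    · rw [Equiv.Perm.mul_apply, Equiv.Perm.mul_apply, ← h3]; exact k3

lemma good_inv {g g' : Equiv.Perm α} (hg : Good s t g g') :
    Good s t g⁻¹ g'⁻¹ := by
  obtain ⟨hg1, hg2, hg3⟩ := hg
  have e1 : g⁻¹ s = s ∨ g⁻¹ s = t := by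
    by_cases h : g s = s
    · exact Or.inl (Equiv.Perm.inv_eq_iff_eq.mpr h.symm)
    · have h1 : g s = t := hg1.resolve_left h
      have h2 : g t = s := by
        rcases hg2 with h' | h'
        · exact h'
        · exact absurd (h1.trans (g.injective (h1.trans h'.symm)).symm) h
      exact Or.inr (Equiv.Perm.inv_eq_iff_eq.mpr h2.symm)
  have e2 : g⁻¹ t = s ∨ g⁻¹ t = t := by
    by_cases h : g t = t
    · exact Or.inr (Equiv.Perm.inv_eq_iff_eq.mpr h.symm)
    · have h1 : g t = s := hg2.resolve_right h
      have h2 : g s = t := by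
        rcases hg1 with h' | h'
        · exact absurd (h1.trans (g.injective (h1.trans h'.symm)).symm) h
        · exact h'
      exact Or.inl (Equiv.Perm.inv_eq_iff_eq.mpr h2.symm)
  refine ⟨e1, e2, fun y hy1 hy2 => ?_⟩
  have k1 : g⁻¹ y ≠ s := by
    intro h
    have hy : y = g s := by rw [← h, Equiv.Perm.inv_def, Equiv.apply_symm_apply]
    rcases hg1 with h' | h'
    · exact hy1 (hy.trans h')
    · exact hy2 (hy.trans h')
  have k2 : g⁻¹ y ≠ t := by
    intro h
    have hy : y = g t := by rw [← h, Equiv.Perm.inv_def, Equiv.apply_symm_apply]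
    rcases hg2 with h' | h'
    · exact hy1 (hy.trans h')
    · exact hy2 (hy.trans h')
  obtain ⟨_, _, h3⟩ := hg3 _ k1 k2
  refine ⟨k1, k2, ?_⟩
  have hk : g' (g⁻¹ y) = y := by rw [← h3, Equiv.Perm.inv_def, Equiv.apply_symm_apply]
  exact Equiv.Perm.eq_inv_iff_eq.mpr hk

lemma good_pow {g g' : Equiv.Perm α} (hg : Good s t g g') :
    ∀ n : ℕ, Good s t (g ^ n) (g' ^ n) := by
  intro n
  induction n with
  | zero => rw [pow_zero, pow_zero]; exact good_one s t
  | succ n ih => rw [pow_succ, pow_succ]; exact good_mul ih hg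

lemma good_zpow {g g' : Equiv.Perm α} (hg : Good s t g g') (j : ℤ) :
    Good s t (g ^ j) (g' ^ j) := by
  obtain ⟨n, rfl | rfl⟩ := j.eq_nat_or_neg
  · rw [zpow_natCast, zpow_natCast]; exact good_pow hg n
  · rw [zpow_neg, zpow_neg, zpow_natCast, zpow_natCast]
    exact good_inv (good_pow hg n)

lemma zpow_fix {g : Equiv.Perm α} {x : α} (h : g x = x) (j : ℤ) : (g ^ j) x = x := by
  have hn : ∀ n : ℕ, (g ^ n) x = x := by
    intro n
    induction n with
    | zero => simp
    | succ n ih => rw [pow_succ, Equiv.Perm.mul_apply, h, ih]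
  obtain ⟨n, rfl | rfl⟩ := j.eq_nat_or_neg
  · rw [zpow_natCast]; exact hn n
  · rw [zpow_neg, zpow_natCast]
    exact Equiv.Perm.inv_eq_iff_eq.mpr (hn n).symm

lemma mk_good {p p' : Equiv.Perm α} (hps : p s = t) (hpt : p t = s)
    (hpp' : ∀ y, y ≠ s → y ≠ t → p' y = p y) : Good s t p p' :=
  ⟨Or.inr hps, Or.inl hpt, fun y hy1 hy2 =>
    ⟨fun h => hy2 (p.injective (h.trans hpt.symm)),
     fun h => hy1 (p.injective (h.trans hps.symm)),
     (hpp' y hy1 hy2).symm⟩⟩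

lemma mk_good' {p p' : Equiv.Perm α} (hps : p s = t) (hpt : p t = s)
    (hp's : p' s = s) (hp't : p' t = t)
    (hpp' : ∀ y, y ≠ s → y ≠ t → p' y = p y) : Good s t p' p := by
  refine ⟨Or.inl hp's, Or.inr hp't, fun y hy1 hy2 => ?_⟩
  rw [hpp' y hy1 hy2]
  exact ⟨fun h => hy2 (p.injective (h.trans hpt.symm)),
    fun h => hy1 (p.injective (h.trans hps.symm)), rfl⟩

lemma good_sameFace {p q p' q' : Equiv.Perm α}
    (hp : Good s t p p') (hq : Good s t q q') {x y : α}
    (hx1 : x ≠ s) (hx2 : x ≠ t) (h : SameFace p q x y) :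
    SameFace p' q' x y ∧ y ≠ s ∧ y ≠ t := by
  rcases h with ⟨j, rfl⟩ | ⟨j, rfl⟩
  · obtain ⟨h1, h2, h3⟩ :=
      (good_mul (good_zpow (good_mul hq hp) j) hp).2.2 x hx1 hx2
    exact ⟨Or.inl ⟨j, h3⟩, h1, h2⟩
  · obtain ⟨h1, h2, h3⟩ := (good_zpow (good_mul hq hp) j).2.2 x hx1 hx2
    exact ⟨Or.inr ⟨j, h3⟩, h1, h2⟩

lemma card_image_filter {S : Finset α} (hst : s ≠ t) (hs : s ∈ S) (ht : t ∈ S)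
    {R R' : α → α → Prop}
    (hRs : ∀ y, R s y ↔ (y = s ∨ y = t))
    (hRt : ∀ y, R t y ↔ (y = s ∨ y = t))
    (hrefl : ∀ x ∈ S \ {s, t}, R' x x)
    (hcong : ∀ x ∈ S \ {s, t}, ∀ y, (y ∈ S ∧ R x y) ↔ (y ∈ S \ {s, t} ∧ R' x y)) :
    (S.image fun x => S.filter (R x)).card
      = ((S \ {s, t}).image fun x => (S \ {s, t}).filter (R' x)).card + 1 := by
  have face_s : S.filter (R s) = {s, t} := by
    ext y
    simp only [Finset.mem_filter, Finset.mem_insert, Finset.mem_singleton]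
    constructor
    · rintro ⟨_, h2⟩; exact (hRs y).1 h2
    · rintro (rfl | rfl)
      · exact ⟨hs, (hRs _).2 (Or.inl rfl)⟩
      · exact ⟨ht, (hRs _).2 (Or.inr rfl)⟩
  have face_t : S.filter (R t) = {s, t} := by
    ext y
    simp only [Finset.mem_filter, Finset.mem_insert, Finset.mem_singleton]
    constructor
    · rintro ⟨_, h2⟩; exact (hRt y).1 h2
    · rintro (rfl | rfl)
      · exact ⟨hs, (hRt _).2 (Or.inl rfl)⟩
      · exact ⟨ht, (hRt _).2 (Or.inr rfl)⟩
  have hfx : ∀ x ∈ S \ {s, t}, S.filter (R x) = (S \ {s, t}).filter (R' x) := by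
    intro x hx
    ext y
    simp only [Finset.mem_filter]
    exact hcong x hx y
  have key : (S.image fun x => S.filter (R x))
      = insert ({s, t} : Finset α)
          ((S \ {s, t}).image fun x => (S \ {s, t}).filter (R' x)) := by
    ext F
    simp only [Finset.mem_insert, Finset.mem_image]
    constructor
    · rintro ⟨x, hxS, rfl⟩
      by_cases h1 : x = s
      · subst h1; exact Or.inl face_s
      · by_cases h2 : x = t
        · subst h2; exact Or.inl face_t
        · have hx' : x ∈ S \ {s, t} := by
            simp only [Finset.mem_sdiff, Finset.mem_insert, Finset.mem_singleton]
            exact ⟨hxS, by tauto⟩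
          exact Or.inr ⟨x, hx', (hfx x hx').symm⟩
    · rintro (rfl | ⟨x, hx, rfl⟩)
      · exact ⟨s, hs, face_s⟩
      · exact ⟨x, Finset.sdiff_subset hx, hfx x hx⟩
  rw [key, Finset.card_insert_of_notMem]
  intro hmem
  obtain ⟨x, hx, hfix⟩ := Finset.mem_image.1 hmem
  have hxx : x ∈ (S \ {s, t}).filter (R' x) := Finset.mem_filter.2 ⟨hx, hrefl x hx⟩
  rw [hfix] at hxx
  obtain ⟨_, hx2⟩ := Finset.mem_sdiff.1 hx
  simp only [Finset.mem_insert, Finset.mem_singleton] at hxx hx2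
  exact hx2 hxx

lemma numFaces_sdiff {S : Finset α} {p q p' q' : Equiv.Perm α}
    (hst : s ≠ t) (hs : s ∈ S) (ht : t ∈ S)
    (hps : p s = t) (hpt : p t = s) (hqs : q s = t) (hqt : q t = s)
    (Gp : Good s t p p') (Gp' : Good s t p' p)
    (Gq : Good s t q q') (Gq' : Good s t q' q) :
    numFaces S p q = numFaces (S \ {s, t}) p' q' + 1 := by
  have hRs : ∀ y, SameFace p q s y ↔ (y = s ∨ y = t) := by
    intro y
    constructor
    · rintro (⟨j, rfl⟩ | ⟨j, rfl⟩)
      · right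
        rw [Equiv.Perm.mul_apply, hps]
        exact zpow_fix (by rw [Equiv.Perm.mul_apply, hpt, hqs]) j
      · left
        exact zpow_fix (by rw [Equiv.Perm.mul_apply, hps, hqt]) j
    · rintro (rfl | rfl)
      · exact Or.inr ⟨0, by simp⟩
      · exact Or.inl ⟨0, by simp [hps]⟩
  have hRt : ∀ y, SameFace p q t y ↔ (y = s ∨ y = t) := by
    intro y
    constructor
    · rintro (⟨j, rfl⟩ | ⟨j, rfl⟩)
      · left
        rw [Equiv.Perm.mul_apply, hpt]
        exact zpow_fix (by rw [Equiv.Perm.mul_apply, hps, hqt]) j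
      · right
        exact zpow_fix (by rw [Equiv.Perm.mul_apply, hpt, hqs]) j
    · rintro (rfl | rfl)
      · exact Or.inl ⟨0, by simp [hpt]⟩
      · exact Or.inr ⟨0, by simp⟩
  have hcong : ∀ x ∈ S \ {s, t}, ∀ y,
      (y ∈ S ∧ SameFace p q x y) ↔ (y ∈ S \ {s, t} ∧ SameFace p' q' x y) := by
    intro x hx y
    obtain ⟨hxS, hx2⟩ := Finset.mem_sdiff.1 hx
    simp only [Finset.mem_insert, Finset.mem_singleton] at hx2
    push_neg at hx2
    constructor
    · rintro ⟨hyS, hsf⟩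
      obtain ⟨h1, h2, h3⟩ := good_sameFace Gp Gq hx2.1 hx2.2 hsf
      refine ⟨Finset.mem_sdiff.2 ⟨hyS, ?_⟩, h1⟩
      simp only [Finset.mem_insert, Finset.mem_singleton]
      tauto
    · rintro ⟨hyS, hsf⟩
      exact ⟨(Finset.mem_sdiff.1 hyS).1, (good_sameFace Gp' Gq' hx2.1 hx2.2 hsf).1⟩
  have h := card_image_filter hst hs ht hRs hRt
      (fun x _ => Or.inr ⟨0, by simp⟩) hcong
  unfold numFaces faces faceOf
  exact h

lemma closure_good {b w e b' w' e' : Equiv.Perm α}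
    (hb : Good s t b b') (hw : Good s t w w') (he : Good s t e e') :
    ∀ g ∈ Subgroup.closure ({b, w, e} : Set (Equiv.Perm α)),
      ∃ g' ∈ Subgroup.closure ({b', w', e'} : Set (Equiv.Perm α)), Good s t g g' := by
  intro g hg
  induction hg using Subgroup.closure_induction with
  | mem x hx =>
    simp only [Set.mem_insert_iff, Set.mem_singleton_iff] at hx
    rcases hx with rfl | rfl | rfl
    · exact ⟨b', Subgroup.subset_closure (by simp), hb⟩
    · exact ⟨w', Subgroup.subset_closure (by simp), hw⟩
    · exact ⟨e', Subgroup.subset_closure (by simp), he⟩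
  | one => exact ⟨1, Subgroup.one_mem _, good_one s t⟩
  | mul x y hx hy ihx ihy =>
    obtain ⟨x', hx', gx⟩ := ihx
    obtain ⟨y', hy', gy⟩ := ihy
    exact ⟨x' * y', Subgroup.mul_mem _ hx' hy', good_mul gx gy⟩
  | inv x hx ih =>
    obtain ⟨x', hx', gx⟩ := ih
    exact ⟨x'⁻¹, Subgroup.inv_mem _ hx', good_inv gx⟩

lemma numComponents_sdiff {S : Finset α} {b w e b' w' e' : Equiv.Perm α}
    (hst : s ≠ t) (hs : s ∈ S) (ht : t ∈ S)
    (hes : e s = t) (het : e t = s)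
    (Gb : Good s t b b') (Gb' : Good s t b' b)
    (Gw : Good s t w w') (Gw' : Good s t w' w)
    (Ge : Good s t e e') (Ge' : Good s t e' e) :
    numComponents S b w e = numComponents (S \ {s, t}) b' w' e' + 1 := by
  have hRs : ∀ y, SameComponent b w e s y ↔ (y = s ∨ y = t) := by
    intro y
    constructor
    · rintro ⟨g, hg, rfl⟩
      obtain ⟨g', _, hgood⟩ := closure_good Gb Gw Ge g hg
      exact hgood.1
    · rintro (rfl | rfl)
      · exact ⟨1, Subgroup.one_mem _, rfl⟩
      · exact ⟨e, Subgroup.subset_closure (by simp), hes⟩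
  have hRt : ∀ y, SameComponent b w e t y ↔ (y = s ∨ y = t) := by
    intro y
    constructor
    · rintro ⟨g, hg, rfl⟩
      obtain ⟨g', _, hgood⟩ := closure_good Gb Gw Ge g hg
      exact hgood.2.1
    · rintro (rfl | rfl)
      · exact ⟨e, Subgroup.subset_closure (by simp), het⟩
      · exact ⟨1, Subgroup.one_mem _, rfl⟩
  have hcong : ∀ x ∈ S \ {s, t}, ∀ y,
      (y ∈ S ∧ SameComponent b w e x y) ↔
        (y ∈ S \ {s, t} ∧ SameComponent b' w' e' x y) := by
    intro x hx y
    obtain ⟨hxS, hx2⟩ := Finset.mem_sdiff.1 hx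
    simp only [Finset.mem_insert, Finset.mem_singleton] at hx2
    push_neg at hx2
    constructor
    · rintro ⟨hyS, g, hg, rfl⟩
      obtain ⟨g', hg', hgood⟩ := closure_good Gb Gw Ge g hg
      obtain ⟨h1, h2, h3⟩ := hgood.2.2 x hx2.1 hx2.2
      refine ⟨Finset.mem_sdiff.2 ⟨hyS, ?_⟩, g', hg', h3.symm⟩
      simp only [Finset.mem_insert, Finset.mem_singleton]
      tauto
    · rintro ⟨hyS, g, hg, rfl⟩
      obtain ⟨g', hg', hgood⟩ := closure_good Gb' Gw' Ge' g hg
      obtain ⟨h1, h2, h3⟩ := hgood.2.2 x hx2.1 hx2.2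
      exact ⟨(Finset.mem_sdiff.1 hyS).1, g', hg', h3.symm⟩
  have hrefl : ∀ x ∈ S \ {s, t}, SameComponent b' w' e' x x :=
    fun x _ => ⟨1, Subgroup.one_mem _, rfl⟩
  have h := card_image_filter hst hs ht hRs hRt hrefl hcong
  unfold numComponents
  exact h

end RemoveEdgeAux

/-- if both extremities of the edge `E₀ = {s, e s}` of the map
`M = (S,b,w,e)` are leaves, then `E₀` is straight, and `M \ E₀` has two fewer
vertices, one fewer edge, one fewer face and one fewer connected component than `M`;
consequently `d(M \ E₀) = d(M)`. -/
theorem remove_edge_both_leaves (S : Finset α) (b w e : Equiv.Perm α)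
    (hb : IsPairing S b) (hw : IsPairing S w) (he : IsPairing S e)
    (s : α) (hs : s ∈ S)
    (hblackleaf : b s = e s) (hwhiteleaf : w s = e s) :
    IsStraight b w s (e s) ∧
    numVertices S b w e
      = numVertices (S \ {s, e s}) (removeP b s (e s)) (removeP w s (e s))
          (removeP e s (e s)) + 2 ∧
    numEdges S = numEdges (S \ {s, e s}) + 1 ∧
    numFaces S b w = numFaces (S \ {s, e s}) (removeP b s (e s)) (removeP w s (e s)) + 1 ∧
    numComponents S b w e
      = numComponents (S \ {s, e s}) (removeP b s (e s)) (removeP w s (e s))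
          (removeP e s (e s)) + 1 ∧
    dInv (S \ {s, e s}) (removeP b s (e s)) (removeP w s (e s)) (removeP e s (e s))
      = dInv S b w e := by
  obtain ⟨hb1, hb2⟩ := hb
  obtain ⟨hw1, hw2⟩ := hw
  obtain ⟨he1, he2⟩ := he
  have hst : s ≠ e s := fun h => (he2 s).2 hs h.symm
  have het : e (e s) = s := he1 s
  have ht : e s ∈ S := (he2 (e s)).1 (by rw [het]; exact hst)
  have hbt : b (e s) = s := by rw [← hblackleaf]; exact hb1 s
  have hwt : w (e s) = s := by rw [← hwhiteleaf]; exact hw1 s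
  have hrem : ∀ f : Equiv.Perm α, f s = e s → f (e s) = s →
      (removeP f s (e s)) s = s ∧ (removeP f s (e s)) (e s) = e s ∧
      ∀ y, y ≠ s → y ≠ e s → removeP f s (e s) y = f y := by
    intro f h1 h2
    have hrw : ∀ x, removeP f s (e s) x = Equiv.swap s (e s) (f x) := by
      intro x
      simp [removeP, h1, h2, Equiv.swap_self, Equiv.Perm.mul_apply]
    refine ⟨?_, ?_, ?_⟩
    · rw [hrw, h1, Equiv.swap_apply_right]
    · rw [hrw, h2, Equiv.swap_apply_left]
    · intro y hy1 hy2
      rw [hrw]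
      exact Equiv.swap_apply_of_ne_of_ne
        (fun h => hy2 (f.injective (h.trans h2.symm)))
        (fun h => hy1 (f.injective (h.trans h1.symm)))
  obtain ⟨hbs', hbt', hbo⟩ := hrem b hblackleaf hbt
  obtain ⟨hws', hwt', hwo⟩ := hrem w hwhiteleaf hwt
  obtain ⟨hes', het', heo⟩ := hrem e rfl het
  have Gb : Good s (e s) b (removeP b s (e s)) := mk_good hblackleaf hbt hbo
  have Gb' : Good s (e s) (removeP b s (e s)) b := mk_good' hblackleaf hbt hbs' hbt' hbo
  have Gw : Good s (e s) w (removeP w s (e s)) := mk_good hwhiteleaf hwt hwo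
  have Gw' : Good s (e s) (removeP w s (e s)) w := mk_good' hwhiteleaf hwt hws' hwt' hwo
  have Ge : Good s (e s) e (removeP e s (e s)) := mk_good rfl het heo
  have Ge' : Good s (e s) (removeP e s (e s)) e := mk_good' rfl het hes' het' heo
  have hsub : {s, e s} ⊆ S := by
    intro x hx
    simp only [Finset.mem_insert, Finset.mem_singleton] at hx
    rcases hx with rfl | rfl <;> assumption
  have hV1 : numFaces S b e
      = numFaces (S \ {s, e s}) (removeP b s (e s)) (removeP e s (e s)) + 1 :=
    numFaces_sdiff hst hs ht hblackleaf hbt rfl het Gb Gb' Ge Ge'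
  have hV2 : numFaces S w e
      = numFaces (S \ {s, e s}) (removeP w s (e s)) (removeP e s (e s)) + 1 :=
    numFaces_sdiff hst hs ht hwhiteleaf hwt rfl het Gw Gw' Ge Ge'
  have hF : numFaces S b w
      = numFaces (S \ {s, e s}) (removeP b s (e s)) (removeP w s (e s)) + 1 :=
    numFaces_sdiff hst hs ht hblackleaf hbt hwhiteleaf hwt Gb Gb' Gw Gw'
  have hC : numComponents S b w e
      = numComponents (S \ {s, e s}) (removeP b s (e s)) (removeP w s (e s))
          (removeP e s (e s)) + 1 :=
    numComponents_sdiff hst hs ht rfl het Gb Gb' Gw Gw' Ge Ge'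
  have hcard : (S \ {s, e s}).card = S.card - 2 := by
    rw [Finset.card_sdiff_of_subset hsub, Finset.card_pair hst]
  have h2card : 2 ≤ S.card :=
    le_trans (le_of_eq (Finset.card_pair hst).symm) (Finset.card_le_card hsub)
  have hE : numEdges S = numEdges (S \ {s, e s}) + 1 := by
    unfold numEdges
    rw [hcard]
    omega
  refine ⟨⟨Or.inl ⟨0, by simp [hblackleaf]⟩, ⟨0, by simp [hblackleaf]⟩⟩, ?_, hE, hF, hC, ?_⟩
  · unfold numVertices
    rw [hV1, hV2]
    omega
  · unfold dInv eulerChar numVertices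
    rw [hV1, hV2, hE, hF, hC]
    push_cast
    ring


end
end

section
/- Let M be a map and let E0 be an edge of M exactly one of whose extremities is a leaf. Then E0 is straight, and M \ E0 has one fewer vertex and one fewer edge than M, while the numbers of faces and of connected components are unchanged; consequently d(M \ E0) = d(M). -/
open Equiv Polynomial

open scoped Classical

noncomputable section

variable {α : Type*}

lemma apply_invol {f : Equiv.Perm α} (h : f * f = 1) (x : α) : f (f x) = x := by
  have := Equiv.ext_iff.1 h x
  simpa [Equiv.Perm.mul_apply] using this

lemma key_conj {b w : Equiv.Perm α} (hb : b * b = 1) (hw : w * w = 1) (j : ℤ) :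
    b * (w * b) ^ j = (w * b) ^ (-j) * b := by
  have hbinv : b⁻¹ = b := inv_eq_of_mul_eq_one_right hb
  have hwinv : w⁻¹ = w := inv_eq_of_mul_eq_one_right hw
  have h1 : b * (w * b) * b⁻¹ = (w * b)⁻¹ := by
    rw [hbinv, mul_inv_rev, hbinv, hwinv]
    calc b * (w * b) * b = b * w * (b * b) := by simp [mul_assoc]
    _ = b * w := by rw [hb, mul_one]
  have h2 : (w * b) ^ (-j) = b * (w * b) ^ j * b⁻¹ := by
    rw [zpow_neg, ← inv_zpow, ← h1, conj_zpow]
  rw [h2, hbinv, mul_assoc, hb, mul_one]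

lemma sameFace_refl (b w : Equiv.Perm α) (x : α) : SameFace b w x x :=
  Or.inr ⟨0, by simp⟩

lemma sameFace_symm {b w : Equiv.Perm α} (hb : b * b = 1) (hw : w * w = 1) {x y : α}
    (h : SameFace b w x y) : SameFace b w y x := by
  rcases h with ⟨j, hj⟩ | ⟨j, hj⟩
  · refine Or.inl ⟨j, ?_⟩
    have hinv : ((w*b)^j * b) * ((w*b)^j * b) = 1 := by
      calc ((w*b)^j * b) * ((w*b)^j * b) = (w*b)^j * (b * (w*b)^j) * b := by simp [mul_assoc]
      _ = (w*b)^j * ((w*b)^(-j) * b) * b := by rw [key_conj hb hw]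
      _ = (w*b)^j * (w*b)^(-j) * (b * b) := by simp [mul_assoc]
      _ = 1 := by rw [hb, mul_one, ← zpow_add]; simp
    rw [hj, ← Equiv.Perm.mul_apply, hinv, Equiv.Perm.one_apply]
  · refine Or.inr ⟨-j, ?_⟩
    rw [hj, ← Equiv.Perm.mul_apply, ← zpow_add]
    simp

lemma sameFace_trans {b w : Equiv.Perm α} (hb : b * b = 1) (hw : w * w = 1) {x y z : α}
    (h1 : SameFace b w x y) (h2 : SameFace b w y z) : SameFace b w x z := by
  have hEE : ∀ j k : ℤ, ((w*b)^k * b) * ((w*b)^j * b) = (w*b)^(k-j) := by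
    intro j k
    calc ((w*b)^k * b) * ((w*b)^j * b) = (w*b)^k * (b * (w*b)^j) * b := by simp [mul_assoc]
    _ = (w*b)^k * ((w*b)^(-j) * b) * b := by rw [key_conj hb hw]
    _ = (w*b)^k * (w*b)^(-j) * (b * b) := by simp [mul_assoc]
    _ = (w*b)^(k-j) := by rw [hb, mul_one, ← zpow_add]; ring_nf
  have hbE : ∀ j k : ℤ, ((w*b)^k * b) * (w*b)^j = (w*b)^(k-j) * b := by
    intro j k
    calc ((w*b)^k * b) * (w*b)^j = (w*b)^k * (b * (w*b)^j) := by simp [mul_assoc]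
    _ = (w*b)^k * ((w*b)^(-j) * b) := by rw [key_conj hb hw]
    _ = (w*b)^(k-j) * b := by rw [← mul_assoc, ← zpow_add]; ring_nf
  rcases h1 with ⟨j, hj⟩ | ⟨j, hj⟩ <;> rcases h2 with ⟨k, hk⟩ | ⟨k, hk⟩
  · exact Or.inr ⟨k - j, by rw [hk, hj, ← Equiv.Perm.mul_apply, hEE]⟩
  · exact Or.inl ⟨k + j, by rw [hk, hj, ← Equiv.Perm.mul_apply, ← mul_assoc, ← zpow_add]⟩
  · exact Or.inl ⟨k - j, by rw [hk, hj, ← Equiv.Perm.mul_apply, hbE]⟩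
  · exact Or.inr ⟨k + j, by rw [hk, hj, ← Equiv.Perm.mul_apply, ← zpow_add]⟩

lemma sameFace_iff_orbit {b w : Equiv.Perm α} (hb : b * b = 1) (hw : w * w = 1) (x y : α) :
    SameFace b w x y ↔ ∃ g ∈ Subgroup.closure ({b, w} : Set (Equiv.Perm α)), g x = y := by
  have hbm : b ∈ Subgroup.closure ({b, w} : Set (Equiv.Perm α)) :=
    Subgroup.subset_closure (by simp)
  have hwm : w ∈ Subgroup.closure ({b, w} : Set (Equiv.Perm α)) :=
    Subgroup.subset_closure (by simp)
  constructor
  · rintro (⟨j, hj⟩ | ⟨j, hj⟩)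
    · exact ⟨(w*b)^j * b, mul_mem (Subgroup.zpow_mem _ (mul_mem hwm hbm) j) hbm, hj.symm⟩
    · exact ⟨(w*b)^j, Subgroup.zpow_mem _ (mul_mem hwm hbm) j, hj.symm⟩
  · rintro ⟨g, hg, rfl⟩
    have key : ∀ g ∈ Subgroup.closure ({b, w} : Set (Equiv.Perm α)),
        ∀ z, SameFace b w z (g z) := by
      intro g hg
      refine Subgroup.closure_induction ?_ ?_ ?_ ?_ hg
      · rintro p (rfl | rfl) z
        · exact Or.inl ⟨0, by simp⟩
        · refine Or.inl ⟨1, ?_⟩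
          rw [zpow_one]
          calc p z = p (b (b z)) := by rw [apply_invol hb]
          _ = (p * b * b) z := by simp [Equiv.Perm.mul_apply]
      · exact fun z => sameFace_refl b w z
      · intro p q _ _ hp hq z
        exact sameFace_trans hb hw (hq z) (by simpa [Equiv.Perm.mul_apply] using hp (q z))
      · intro p _ hp z
        have := hp (p⁻¹ z)
        rw [show p (p⁻¹ z) = z from Equiv.apply_symm_apply p z] at this
        exact sameFace_symm hb hw this
    exact key g hg x

lemma sameComponent_refl (b w e : Equiv.Perm α) (x : α) : SameComponent b w e x x :=
  ⟨1, one_mem _, rfl⟩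
lemma sameComponent_symm {b w e : Equiv.Perm α} {x y : α} (h : SameComponent b w e x y) :
    SameComponent b w e y x := by
  obtain ⟨g, hg, rfl⟩ := h
  exact ⟨g⁻¹, inv_mem hg, (Equiv.symm_apply_apply g x : g⁻¹ (g x) = x)⟩
lemma sameComponent_trans {b w e : Equiv.Perm α} {x y z : α} (h1 : SameComponent b w e x y)
    (h2 : SameComponent b w e y z) : SameComponent b w e x z := by
  obtain ⟨g, hg, rfl⟩ := h1
  obtain ⟨g', hg', rfl⟩ := h2
  exact ⟨g' * g, mul_mem hg' hg, rfl⟩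

lemma orbit_dominate (Gen : Set (Equiv.Perm α)) (G' : Subgroup (Equiv.Perm α)) (r : α → α)
    (hgen : ∀ p ∈ Gen, ∀ x, ∃ g' ∈ G', g' (r x) = r (p x)) :
    ∀ g ∈ Subgroup.closure Gen, ∀ x, ∃ g' ∈ G', g' (r x) = r (g x) := by
  intro g hg
  refine Subgroup.closure_induction hgen ?_ ?_ ?_ hg
  · exact fun x => ⟨1, one_mem _, rfl⟩
  · intro a c _ _ ha hc x
    obtain ⟨g1, m1, h1⟩ := hc x
    obtain ⟨g2, m2, h2⟩ := ha (c x)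
    exact ⟨g2 * g1, mul_mem m2 m1, by rw [Equiv.Perm.mul_apply, h1, h2, Equiv.Perm.mul_apply]⟩
  · intro a _ ha x
    obtain ⟨g', m, h⟩ := ha (a⁻¹ x)
    rw [show a (a⁻¹ x) = x from Equiv.apply_symm_apply a x] at h
    exact ⟨g'⁻¹, inv_mem m, by rw [← h]; exact Equiv.symm_apply_apply g' (r (a⁻¹ x))⟩
lemma class_eq (S : Finset α) (R : α → α → Prop)
    (Rsymm : ∀ {x y}, R x y → R y x) (Rtrans : ∀ {x y z}, R x y → R y z → R x z)
    {x y : α} (h : R x y) : S.filter (R x) = S.filter (R y) := by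
  ext z
  simp only [Finset.mem_filter, and_congr_right_iff]
  exact fun _ => ⟨fun hz => Rtrans (Rsymm h) hz, fun hz => Rtrans h hz⟩

lemma count_eq (S : Finset α) (R R' : α → α → Prop) (s t : α)
    (hs : s ∈ S) (ht : t ∈ S)
    (Rsymm : ∀ {x y}, R x y → R y x) (Rtrans : ∀ {x y z}, R x y → R y z → R x z)
    (Rrefl : ∀ x, R x x) (hst : R s t)
    (heq : ∀ x ∈ S \ {s, t}, ∀ y ∈ S \ {s, t}, (R' x y ↔ R x y))
    (u : α) (hu : u ∈ S \ {s, t}) (hsu : R s u) :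
    ((S \ {s, t}).image fun x => (S \ {s, t}).filter (R' x)).card
      = (S.image fun x => S.filter (R x)).card := by
  set S' := S \ {s, t} with hS'
  set f : α → Finset α := fun x => S.filter (R x) with hf
  set f' : α → Finset α := fun x => S'.filter (R' x) with hfp
  have hf' : ∀ x ∈ S', f' x = f x \ {s, t} := by
    intro x hx
    ext z
    simp only [hfp, hf, Finset.mem_filter, Finset.mem_sdiff, hS']
    constructor
    · rintro ⟨⟨hzS, hz⟩, hR⟩
      exact ⟨⟨hzS, (heq x hx z (Finset.mem_sdiff.2 ⟨hzS, hz⟩)).1 hR⟩, hz⟩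
    · rintro ⟨⟨hzS, hR⟩, hz⟩
      exact ⟨⟨hzS, hz⟩, (heq x hx z (Finset.mem_sdiff.2 ⟨hzS, hz⟩)).2 hR⟩
  have himg : S'.image f' = (S.image f).image (· \ {s, t}) := by
    rw [Finset.image_image]
    ext F
    simp only [Finset.mem_image, Function.comp]
    constructor
    · rintro ⟨x, hx, rfl⟩
      exact ⟨x, (Finset.mem_sdiff.1 hx).1, (hf' x hx).symm⟩
    · rintro ⟨x, hxS, rfl⟩
      by_cases hx' : x ∈ S'
      · exact ⟨x, hx', hf' x hx'⟩
      · have hxst : x = s ∨ x = t := by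
          by_contra hcon
          push_neg at hcon
          exact hx' (Finset.mem_sdiff.2 ⟨hxS, by simp [hcon.1, hcon.2]⟩)
        have hfx : f u = f x := by
          rcases hxst with rfl | rfl
          · exact (class_eq S R Rsymm Rtrans hsu).symm
          · exact Eq.trans (Eq.symm (class_eq S R Rsymm Rtrans hsu))
              (class_eq S R Rsymm Rtrans hst)
        exact ⟨u, hu, by rw [hf' u hu, hfx]⟩
  have hne' : ∀ F ∈ S.image f, (F \ {s, t}).Nonempty := by
    intro F hF
    obtain ⟨x, hxS, rfl⟩ := Finset.mem_image.1 hF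
    by_cases hRxs : R x s
    · refine ⟨u, Finset.mem_sdiff.2 ⟨Finset.mem_filter.2 ⟨(Finset.mem_sdiff.1 hu).1,
        Rtrans hRxs hsu⟩, (Finset.mem_sdiff.1 hu).2⟩⟩
    · have hx2 : x ∉ ({s, t} : Finset α) := by
        simp only [Finset.mem_insert, Finset.mem_singleton]
        rintro (rfl | rfl)
        · exact hRxs (Rrefl x)
        · exact hRxs (Rsymm hst)
      exact ⟨x, Finset.mem_sdiff.2 ⟨Finset.mem_filter.2 ⟨hxS, Rrefl x⟩, hx2⟩⟩
  have hinj : Set.InjOn (· \ ({s, t} : Finset α)) (S.image f) := by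
    intro F1 h1 F2 h2 hEq
    obtain ⟨z, hz⟩ := hne' F1 h1
    have hEq' : F1 \ {s, t} = F2 \ {s, t} := hEq
    have hz2 : z ∈ F2 \ {s, t} := by rw [← hEq']; exact hz
    obtain ⟨x, hxS, rfl⟩ := Finset.mem_image.1 h1
    obtain ⟨y, hyS, rfl⟩ := Finset.mem_image.1 h2
    have hxz : R x z := (Finset.mem_filter.1 (Finset.mem_sdiff.1 hz).1).2
    have hyz : R y z := (Finset.mem_filter.1 (Finset.mem_sdiff.1 hz2).1).2
    exact class_eq S R Rsymm Rtrans (Rtrans hxz (Rsymm hyz))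
  rw [himg, Finset.card_image_of_injOn hinj]

lemma count_pred (S : Finset α) (R R' : α → α → Prop) (s t : α)
    (hs : s ∈ S) (ht : t ∈ S)
    (Rsymm : ∀ {x y}, R x y → R y x) (Rtrans : ∀ {x y z}, R x y → R y z → R x z)
    (Rrefl : ∀ x, R x x) (hst : R s t)
    (heq : ∀ x ∈ S \ {s, t}, ∀ y ∈ S \ {s, t}, (R' x y ↔ R x y))
    (hiso : ∀ u ∈ S \ {s, t}, ¬ R s u) :
    (S.image fun x => S.filter (R x)).card
      = ((S \ {s, t}).image fun x => (S \ {s, t}).filter (R' x)).card + 1 := by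
  set S' := S \ {s, t} with hS'
  set f : α → Finset α := fun x => S.filter (R x) with hf
  set f' : α → Finset α := fun x => S'.filter (R' x) with hfp
  have hfs : f s = {s, t} := by
    ext z
    simp only [hf, Finset.mem_filter, Finset.mem_insert, Finset.mem_singleton]
    constructor
    · rintro ⟨hzS, hR⟩
      by_contra hcon
      push_neg at hcon
      exact hiso z (Finset.mem_sdiff.2 ⟨hzS, by simp [hcon.1, hcon.2]⟩) hR
    · rintro (rfl | rfl)
      · exact ⟨hs, Rrefl z⟩
      · exact ⟨ht, hst⟩
  have hnot : ∀ x ∈ S', s ∉ f x ∧ t ∉ f x := by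
    intro x hx
    constructor
    · intro hmem
      exact hiso x hx (Rsymm (Finset.mem_filter.1 hmem).2)
    · intro hmem
      exact hiso x hx (Rsymm (Rtrans (Finset.mem_filter.1 hmem).2 (Rsymm hst)))
  have hf' : ∀ x ∈ S', f' x = f x := by
    intro x hx
    ext z
    simp only [hfp, hf, Finset.mem_filter, Finset.mem_sdiff, hS']
    constructor
    · rintro ⟨⟨hzS, hz⟩, hR⟩
      exact ⟨hzS, (heq x hx z (Finset.mem_sdiff.2 ⟨hzS, hz⟩)).1 hR⟩
    · rintro ⟨hzS, hR⟩
      have hz : z ∉ ({s, t} : Finset α) := by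
        simp only [Finset.mem_insert, Finset.mem_singleton]
        rintro (rfl | rfl)
        · exact (hnot x hx).1 (Finset.mem_filter.2 ⟨hzS, hR⟩)
        · exact (hnot x hx).2 (Finset.mem_filter.2 ⟨hzS, hR⟩)
      exact ⟨⟨hzS, hz⟩, (heq x hx z (Finset.mem_sdiff.2 ⟨hzS, hz⟩)).2 hR⟩
  have himg : S.image f = insert ({s, t} : Finset α) (S'.image f') := by
    ext F
    simp only [Finset.mem_image, Finset.mem_insert]
    constructor
    · rintro ⟨x, hxS, rfl⟩
      by_cases hx' : x ∈ S'
      · exact Or.inr ⟨x, hx', hf' x hx'⟩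
      · have hxst : x = s ∨ x = t := by
          by_contra hcon
          push_neg at hcon
          exact hx' (Finset.mem_sdiff.2 ⟨hxS, by simp [hcon.1, hcon.2]⟩)
        refine Or.inl ?_
        rcases hxst with rfl | rfl
        · exact hfs
        · exact Eq.trans (Eq.symm (class_eq S R Rsymm Rtrans hst)) hfs
    · rintro (rfl | ⟨x, hx, rfl⟩)
      · exact ⟨s, hs, hfs⟩
      · exact ⟨x, (Finset.mem_sdiff.1 hx).1, (hf' x hx).symm⟩
  have hmem : ({s, t} : Finset α) ∉ S'.image f' := by
    rw [Finset.mem_image]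
    rintro ⟨x, hx, hfx⟩
    have hxx : x ∈ f' x := by
      rw [hf' x hx]
      exact Finset.mem_filter.2 ⟨(Finset.mem_sdiff.1 hx).1, Rrefl x⟩
    rw [hfx] at hxx
    have := (Finset.mem_sdiff.1 hx).2
    exact this hxx
  rw [himg, Finset.card_insert_of_notMem hmem, add_comm]
lemma removeP_apply (z : Equiv.Perm α) (s t x : α) :
    removeP z s t x = Equiv.swap s t (Equiv.swap s (z t) (Equiv.swap t (z s) (z x))) := rfl

lemma removeP_leaf {z : Equiv.Perm α} {s t : α} (hz : ∀ a, z (z a) = a) (hzs : z s = t) :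
    removeP z s t s = s ∧ removeP z s t t = t ∧
      ∀ x, x ≠ s → x ≠ t → removeP z s t x = z x := by
  have hzt : z t = s := by rw [← hzs, hz]
  refine ⟨?_, ?_, ?_⟩
  · simp [removeP_apply, hzs, hzt, Equiv.swap_self]
  · simp [removeP_apply, hzs, hzt, Equiv.swap_self]
  · intro x h1 h2
    have hzx1 : z x ≠ s := fun h => h2 (by rw [← hz x, h]; exact hzs)
    have hzx2 : z x ≠ t := fun h => h1 (by rw [← hz x, h]; exact hzt)
    simp [removeP_apply, hzs, hzt, Equiv.swap_self,
      Equiv.swap_apply_of_ne_of_ne hzx1 hzx2]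

lemma removeP_merge {w : Equiv.Perm α} {s t : α} (hw : ∀ a, w (w a) = a)
    (hst : s ≠ t) (h1 : w s ≠ s) (h2 : w s ≠ t) (h3 : w t ≠ t) (h4 : w t ≠ s) :
    removeP w s t s = s ∧ removeP w s t t = t ∧
      removeP w s t (w s) = w t ∧ removeP w s t (w t) = w s ∧
      ∀ x, x ≠ s → x ≠ t → x ≠ w s → x ≠ w t → removeP w s t x = w x := by
  have h5 : w t ≠ w s := fun h => hst (by rw [← hw s, ← hw t, h])
  refine ⟨?_, ?_, ?_, ?_, ?_⟩
  · rw [removeP_apply, Equiv.swap_apply_right,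
      Equiv.swap_apply_of_ne_of_ne (Ne.symm hst) (Ne.symm h3), Equiv.swap_apply_right]
  · rw [removeP_apply, Equiv.swap_apply_of_ne_of_ne h3 h5, Equiv.swap_apply_right,
      Equiv.swap_apply_left]
  · rw [removeP_apply, hw, Equiv.swap_apply_of_ne_of_ne hst (Ne.symm h1),
      Equiv.swap_apply_left, Equiv.swap_apply_of_ne_of_ne h4 h3]
  · rw [removeP_apply, hw, Equiv.swap_apply_left,
      Equiv.swap_apply_of_ne_of_ne h1 (Ne.symm h5), Equiv.swap_apply_of_ne_of_ne h1 h2]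
  · intro x k1 k2 k3 k4
    have m1 : w x ≠ t := fun h => k4 (by rw [← hw x, h])
    have m2 : w x ≠ w s := fun h => k1 (by rw [← hw x, h, hw])
    have m3 : w x ≠ s := fun h => k3 (by rw [← hw x, h])
    have m4 : w x ≠ w t := fun h => k2 (by rw [← hw x, h, hw])
    rw [removeP_apply, Equiv.swap_apply_of_ne_of_ne m1 m2,
      Equiv.swap_apply_of_ne_of_ne m3 m4, Equiv.swap_apply_of_ne_of_ne m3 m1]

lemma removeP_leaf_invol {z : Equiv.Perm α} {s t : α} (hz : ∀ a, z (z a) = a)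
    (hzs : z s = t) (hst : s ≠ t) : removeP z s t * removeP z s t = 1 := by
  obtain ⟨p1, p2, p3⟩ := removeP_leaf hz hzs
  ext x
  rw [Equiv.Perm.mul_apply, Equiv.Perm.one_apply]
  by_cases h1 : x = s
  · subst h1; rw [p1, p1]
  by_cases h2 : x = t
  · subst h2; rw [p2, p2]
  · have hzt : z t = s := by rw [← hzs, hz]
    have hzx1 : z x ≠ s := fun h => h2 (by rw [← hz x, h]; exact hzs)
    have hzx2 : z x ≠ t := fun h => h1 (by rw [← hz x, h]; exact hzt)
    rw [p3 x h1 h2, p3 (z x) hzx1 hzx2, hz]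

lemma removeP_merge_invol {w : Equiv.Perm α} {s t : α} (hw : ∀ a, w (w a) = a)
    (hst : s ≠ t) (h1 : w s ≠ s) (h2 : w s ≠ t) (h3 : w t ≠ t) (h4 : w t ≠ s) :
    removeP w s t * removeP w s t = 1 := by
  obtain ⟨p1, p2, p3, p4, p5⟩ := removeP_merge hw hst h1 h2 h3 h4
  ext x
  rw [Equiv.Perm.mul_apply, Equiv.Perm.one_apply]
  by_cases k1 : x = s
  · subst k1; rw [p1, p1]
  by_cases k2 : x = t
  · subst k2; rw [p2, p2]
  by_cases k3 : x = w s
  · subst k3; rw [p3, p4]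
  by_cases k4 : x = w t
  · subst k4; rw [p4, p3]
  · have m1 : w x ≠ t := fun h => k4 (by rw [← hw x, h])
    have m2 : w x ≠ w s := fun h => k1 (by rw [← hw x, h, hw])
    have m3 : w x ≠ s := fun h => k3 (by rw [← hw x, h])
    have m4 : w x ≠ w t := fun h => k2 (by rw [← hw x, h, hw])
    rw [p5 x k1 k2 k3 k4, p5 (w x) m3 m1 m2 m4, hw]

lemma sameFace_comm {b w : Equiv.Perm α} (hb : b * b = 1) (hw : w * w = 1) (x y : α) :
    SameFace b w x y ↔ SameFace w b x y := by
  rw [sameFace_iff_orbit hb hw, sameFace_iff_orbit hw hb, Set.pair_comm]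

lemma numFaces_comm (S : Finset α) {b w : Equiv.Perm α} (hb : b * b = 1) (hw : w * w = 1) :
    numFaces S b w = numFaces S w b := by
  have h : faceOf S b w = faceOf S w b := by
    funext x
    ext z
    simp only [faceOf, Finset.mem_filter, and_congr_right_iff]
    exact fun _ => sameFace_comm hb hw x z
  rw [numFaces, numFaces, faces, faces, h]

lemma sameComponent_comm (b w e : Equiv.Perm α) (x y : α) :
    SameComponent b w e x y ↔ SameComponent w b e x y := by
  unfold SameComponent
  rw [Set.insert_comm]

lemma numComponents_comm (S : Finset α) (b w e : Equiv.Perm α) :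
    numComponents S b w e = numComponents S w b e := by
  have h : (fun x => Finset.filter (SameComponent b w e x) S)
      = fun x => Finset.filter (SameComponent w b e x) S := by
    funext x
    ext z
    simp only [Finset.mem_filter, and_congr_right_iff]
    exact fun _ => sameComponent_comm b w e x z
  unfold numComponents
  rw [h]

lemma conv_orbit (G1 G2 : Set (Equiv.Perm α)) (r : α → α)
    (hgen : ∀ p ∈ G1, ∀ x, ∃ g' ∈ Subgroup.closure G2, g' (r x) = r (p x))
    (x y : α) (hx : r x = x) (hy : r y = y)
    (h : ∃ g ∈ Subgroup.closure G1, g x = y) : ∃ g ∈ Subgroup.closure G2, g x = y := by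
  obtain ⟨g, hg, hgxy⟩ := h
  obtain ⟨g', hg', hgg⟩ := orbit_dominate G1 (Subgroup.closure G2) r hgen g hg x
  rw [hx, hgxy, hy] at hgg
  exact ⟨g', hg', hgg⟩

lemma main_caseA (S : Finset α) (b w e : Equiv.Perm α)
    (hb : IsPairing S b) (hw : IsPairing S w) (he : IsPairing S e)
    (s t : α) (hs : s ∈ S) (hest : e s = t) (hbst : b s = t) (hwst : w s ≠ t) :
    numVertices S b w e
        = numVertices (S \ {s, t}) (removeP b s t) (removeP w s t) (removeP e s t) + 1 ∧
      numEdges S = numEdges (S \ {s, t}) + 1 ∧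
      numFaces (S \ {s, t}) (removeP b s t) (removeP w s t) = numFaces S b w ∧
      numFaces (S \ {s, t}) (removeP w s t) (removeP b s t) = numFaces S w b ∧
      numComponents (S \ {s, t}) (removeP b s t) (removeP w s t) (removeP e s t)
        = numComponents S b w e := by
  -- basic facts
  have hbb : b * b = 1 := Equiv.ext hb.1
  have hww : w * w = 1 := Equiv.ext hw.1
  have hee : e * e = 1 := Equiv.ext he.1
  have hnst : s ≠ t := by
    have := (he.2 s).2 hs
    rw [hest] at this
    exact this.symm
  have hbt : b t = s := by rw [← hbst, hb.1]
  have het : e t = s := by rw [← hest, he.1]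
  have htS : t ∈ S := (he.2 t).1 (by rw [het]; exact hnst)
  have hwss : w s ≠ s := (hw.2 s).2 hs
  have hwts : w t ≠ t := (hw.2 t).2 htS
  have hwtns : w t ≠ s := fun h => hwst (by
    have := congrArg w h
    rw [hw.1] at this
    exact this.symm)
  have hws_mem : w s ∈ S := (hw.2 (w s)).1 (by rw [hw.1]; exact fun h => hwss h.symm)
  have hwsS' : w s ∈ S \ ({s, t} : Finset α) :=
    Finset.mem_sdiff.2 ⟨hws_mem, by simp [hwss, hwst]⟩
  -- removeP computations
  obtain ⟨pw1, pw2, pw3, pw4, pw5⟩ := removeP_merge hw.1 hnst hwss hwst hwts hwtns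
  have hWW : removeP w s t * removeP w s t = 1 :=
    removeP_merge_invol hw.1 hnst hwss hwst hwts hwtns
  have hBB : removeP b s t * removeP b s t = 1 := removeP_leaf_invol hb.1 hbst hnst
  have hEE : removeP e s t * removeP e s t = 1 := removeP_leaf_invol he.1 hest hnst
  -- generator domination: new generators expressed by old group elements (r = id)
  have genLeaf : ∀ (z : Equiv.Perm α), (∀ a, z (z a) = a) → z s = t →
      ∀ (G : Subgroup (Equiv.Perm α)), z ∈ G → ∀ x, ∃ g' ∈ G, g' x = removeP z s t x := by
    intro z hz hzs G hzG x
    obtain ⟨q1, q2, q3⟩ := removeP_leaf hz hzs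
    by_cases h1 : x = s
    · subst h1
      exact ⟨1, one_mem _, by rw [q1]; rfl⟩
    by_cases h2 : x = t
    · subst h2
      exact ⟨1, one_mem _, by rw [q2]; rfl⟩
    · exact ⟨z, hzG, (q3 x h1 h2).symm⟩
  have genMerge : ∀ (z : Equiv.Perm α), (∀ a, z (z a) = a) → z s = t →
      ∀ (G : Subgroup (Equiv.Perm α)), w ∈ G → z ∈ G →
      ∀ x, ∃ g' ∈ G, g' x = removeP w s t x := by
    intro z hz hzs G hwG hzG x
    have hzt : z t = s := by rw [← hzs, hz]
    by_cases h1 : x = s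
    · subst h1
      exact ⟨1, one_mem _, by rw [pw1]; rfl⟩
    by_cases h2 : x = t
    · subst h2
      exact ⟨1, one_mem _, by rw [pw2]; rfl⟩
    by_cases h3 : x = w s
    · subst h3
      refine ⟨w * z * w, mul_mem (mul_mem hwG hzG) hwG, ?_⟩
      rw [pw3]
      simp [Equiv.Perm.mul_apply, hw.1, hzs]
    by_cases h4 : x = w t
    · subst h4
      refine ⟨w * z * w, mul_mem (mul_mem hwG hzG) hwG, ?_⟩
      rw [pw4]
      simp [Equiv.Perm.mul_apply, hw.1, hzt]
    · exact ⟨w, hwG, (pw5 x h1 h2 h3 h4).symm⟩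
  -- shadow retraction r for the reverse direction
  set r : α → α := fun x => if x = s then w s else if x = t then w t else x with hr
  have hrs : r s = w s := by simp [hr]
  have hrt : r t = w t := by simp [hr, Ne.symm hnst]
  have hro : ∀ x, x ≠ s → x ≠ t → r x = x := by intro x h1 h2; simp [hr, h1, h2]
  have hrws : r (w s) = w s := hro _ hwss hwst
  have hrwt : r (w t) = w t := hro _ hwtns hwts
  have genLeafRev : ∀ (z : Equiv.Perm α), (∀ a, z (z a) = a) → z s = t →
      ∀ (G : Subgroup (Equiv.Perm α)), removeP w s t ∈ G → removeP z s t ∈ G →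
      ∀ x, ∃ g' ∈ G, g' (r x) = r (z x) := by
    intro z hz hzs G hWG hZG x
    obtain ⟨q1, q2, q3⟩ := removeP_leaf hz hzs
    have hzt : z t = s := by rw [← hzs, hz]
    by_cases h1 : x = s
    · rw [h1, hzs, hrs, hrt]
      exact ⟨removeP w s t, hWG, pw3⟩
    by_cases h2 : x = t
    · rw [h2, hzt, hrt, hrs]
      exact ⟨removeP w s t, hWG, pw4⟩
    · have hzx1 : z x ≠ s := fun h => h2 (by rw [← hz x, h]; exact hzs)
      have hzx2 : z x ≠ t := fun h => h1 (by rw [← hz x, h]; exact hzt)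
      rw [hro x h1 h2, hro (z x) hzx1 hzx2]
      exact ⟨removeP z s t, hZG, q3 x h1 h2⟩
  have genMergeRev : ∀ (G : Subgroup (Equiv.Perm α)), removeP w s t ∈ G →
      ∀ x, ∃ g' ∈ G, g' (r x) = r (w x) := by
    intro G hWG x
    by_cases h1 : x = s
    · subst h1
      rw [hrs, hrws]
      exact ⟨1, one_mem _, rfl⟩
    by_cases h2 : x = t
    · subst h2
      rw [hrt, hrwt]
      exact ⟨1, one_mem _, rfl⟩
    by_cases h3 : x = w s
    · subst h3
      rw [hw.1, hrws, hrs]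
      exact ⟨1, one_mem _, rfl⟩
    by_cases h4 : x = w t
    · subst h4
      rw [hw.1, hrwt, hrt]
      exact ⟨1, one_mem _, rfl⟩
    · have m1 : w x ≠ t := fun h => h4 (by rw [← hw.1 x, h])
      have m3 : w x ≠ s := fun h => h3 (by rw [← hw.1 x, h])
      rw [hro x h1 h2, hro (w x) m3 m1]
      exact ⟨removeP w s t, hWG, pw5 x h1 h2 h3 h4⟩
  -- collapse retraction r2 for the black-vertex (b,e) reverse direction
  set r2 : α → α := fun x => if x = s then s else if x = t then s else x with hr2
  have hr2s : r2 s = s := by simp [hr2]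
  have hr2t : r2 t = s := by simp [hr2, Ne.symm hnst]
  have hr2o : ∀ x, x ≠ s → x ≠ t → r2 x = x := by intro x h1 h2; simp [hr2, h1, h2]
  have genLeafRev2 : ∀ (z : Equiv.Perm α), (∀ a, z (z a) = a) → z s = t →
      ∀ (G : Subgroup (Equiv.Perm α)), removeP z s t ∈ G →
      ∀ x, ∃ g' ∈ G, g' (r2 x) = r2 (z x) := by
    intro z hz hzs G hZG x
    obtain ⟨q1, q2, q3⟩ := removeP_leaf hz hzs
    have hzt : z t = s := by rw [← hzs, hz]
    by_cases h1 : x = s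
    · subst h1
      rw [hzs, hr2s, hr2t]
      exact ⟨1, one_mem _, rfl⟩
    by_cases h2 : x = t
    · subst h2
      rw [hzt, hr2t, hr2s]
      exact ⟨1, one_mem _, rfl⟩
    · have hzx1 : z x ≠ s := fun h => h2 (by rw [← hz x, h]; exact hzs)
      have hzx2 : z x ≠ t := fun h => h1 (by rw [← hz x, h]; exact hzt)
      rw [hr2o x h1 h2, hr2o (z x) hzx1 hzx2]
      exact ⟨removeP z s t, hZG, q3 x h1 h2⟩
  -- membership helpers
  have mem1 : ∀ (p q : Equiv.Perm α), p ∈ Subgroup.closure ({p, q} : Set (Equiv.Perm α)) :=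
    fun p q => Subgroup.subset_closure (by simp)
  have mem2 : ∀ (p q : Equiv.Perm α), q ∈ Subgroup.closure ({p, q} : Set (Equiv.Perm α)) :=
    fun p q => Subgroup.subset_closure (by simp)
  -- equivalence of the face relations on S' for mixed pairs (z leaf-type, w merged)
  have heqMixed : ∀ (z : Equiv.Perm α) (hz1 : ∀ a, z (z a) = a) (hzs : z s = t)
      (hzz : z * z = 1) (hZZ : removeP z s t * removeP z s t = 1),
      ∀ x ∈ S \ ({s, t} : Finset α), ∀ y ∈ S \ ({s, t} : Finset α),
        (SameFace (removeP z s t) (removeP w s t) x y ↔ SameFace z w x y) := by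
    intro z hz1 hzs hzz hZZ x hx y hy
    obtain ⟨hx1, hx2⟩ : x ≠ s ∧ x ≠ t := by
      have := (Finset.mem_sdiff.1 hx).2
      simp only [Finset.mem_insert, Finset.mem_singleton] at this
      tauto
    obtain ⟨hy1, hy2⟩ : y ≠ s ∧ y ≠ t := by
      have := (Finset.mem_sdiff.1 hy).2
      simp only [Finset.mem_insert, Finset.mem_singleton] at this
      tauto
    rw [sameFace_iff_orbit hZZ hWW, sameFace_iff_orbit hzz hww]
    constructor
    · refine conv_orbit _ _ id ?_ x y rfl rfl
      rintro p (rfl | rfl) u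
      · simpa using genLeaf z hz1 hzs _ (mem1 z w) u
      · simpa using genMerge z hz1 hzs _ (mem2 z w) (mem1 z w) u
    · refine conv_orbit _ _ r ?_ x y (hro x hx1 hx2) (hro y hy1 hy2)
      rintro p (rfl | rfl) u
      · exact genLeafRev p hz1 hzs _ (mem2 _ _) (mem1 _ _) u
      · exact genMergeRev _ (mem2 _ _) u
  -- equivalence of the face relations on S' for the pair (b,e)
  have heqBE : ∀ x ∈ S \ ({s, t} : Finset α), ∀ y ∈ S \ ({s, t} : Finset α),
      (SameFace (removeP b s t) (removeP e s t) x y ↔ SameFace b e x y) := by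
    intro x hx y hy
    obtain ⟨hx1, hx2⟩ : x ≠ s ∧ x ≠ t := by
      have := (Finset.mem_sdiff.1 hx).2
      simp only [Finset.mem_insert, Finset.mem_singleton] at this
      tauto
    obtain ⟨hy1, hy2⟩ : y ≠ s ∧ y ≠ t := by
      have := (Finset.mem_sdiff.1 hy).2
      simp only [Finset.mem_insert, Finset.mem_singleton] at this
      tauto
    rw [sameFace_iff_orbit hBB hEE, sameFace_iff_orbit hbb hee]
    constructor
    · refine conv_orbit _ _ id ?_ x y rfl rfl
      rintro p (rfl | rfl) u
      · simpa using genLeaf b hb.1 hbst _ (mem1 b e) u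
      · simpa using genLeaf e he.1 hest _ (mem2 b e) u
    · refine conv_orbit _ _ r2 ?_ x y (hr2o x hx1 hx2) (hr2o y hy1 hy2)
      rintro p (rfl | rfl) u
      · exact genLeafRev2 p hb.1 hbst _ (mem1 _ _) u
      · exact genLeafRev2 p he.1 hest _ (mem2 _ _) u
  -- equivalence of components on S'
  have heqC : ∀ x ∈ S \ ({s, t} : Finset α), ∀ y ∈ S \ ({s, t} : Finset α),
      (SameComponent (removeP b s t) (removeP w s t) (removeP e s t) x y
        ↔ SameComponent b w e x y) := by
    intro x hx y hy
    obtain ⟨hx1, hx2⟩ : x ≠ s ∧ x ≠ t := by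
      have := (Finset.mem_sdiff.1 hx).2
      simp only [Finset.mem_insert, Finset.mem_singleton] at this
      tauto
    obtain ⟨hy1, hy2⟩ : y ≠ s ∧ y ≠ t := by
      have := (Finset.mem_sdiff.1 hy).2
      simp only [Finset.mem_insert, Finset.mem_singleton] at this
      tauto
    have mb : b ∈ Subgroup.closure ({b, w, e} : Set (Equiv.Perm α)) :=
      Subgroup.subset_closure (by simp)
    have mw : w ∈ Subgroup.closure ({b, w, e} : Set (Equiv.Perm α)) :=
      Subgroup.subset_closure (by simp)
    have me : e ∈ Subgroup.closure ({b, w, e} : Set (Equiv.Perm α)) :=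
      Subgroup.subset_closure (by simp)
    have mB : removeP b s t ∈ Subgroup.closure
        ({removeP b s t, removeP w s t, removeP e s t} : Set (Equiv.Perm α)) :=
      Subgroup.subset_closure (by simp)
    have mW : removeP w s t ∈ Subgroup.closure
        ({removeP b s t, removeP w s t, removeP e s t} : Set (Equiv.Perm α)) :=
      Subgroup.subset_closure (by simp)
    have mE : removeP e s t ∈ Subgroup.closure
        ({removeP b s t, removeP w s t, removeP e s t} : Set (Equiv.Perm α)) :=
      Subgroup.subset_closure (by simp)
    unfold SameComponent
    constructor
    · refine conv_orbit _ _ id ?_ x y rfl rfl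
      rintro p (rfl | rfl | rfl) u
      · simpa using genLeaf b hb.1 hbst _ mb u
      · simpa using genMerge b hb.1 hbst _ mw mb u
      · simpa using genLeaf e he.1 hest _ me u
    · refine conv_orbit _ _ r ?_ x y (hro x hx1 hx2) (hro y hy1 hy2)
      rintro p (rfl | rfl | rfl) u
      · exact genLeafRev p hb.1 hbst _ mW mB u
      · exact genMergeRev _ mW u
      · exact genLeafRev p he.1 hest _ mW mE u
  -- counting: faces of (b,w)
  have hstF : SameFace b w s t := Or.inl ⟨0, by simp [hbst]⟩
  have hsuF : SameFace b w s (w s) :=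
    Or.inl ⟨1, by simp [Equiv.Perm.mul_apply, hb.1]⟩
  have hFaces : numFaces (S \ {s, t}) (removeP b s t) (removeP w s t) = numFaces S b w := by
    unfold numFaces faces faceOf
    exact count_eq S (SameFace b w) (SameFace (removeP b s t) (removeP w s t)) s t hs htS
      (fun h => sameFace_symm hbb hww h) (fun h1 h2 => sameFace_trans hbb hww h1 h2)
      (sameFace_refl b w) hstF (heqMixed b hb.1 hbst hbb hBB) (w s) hwsS' hsuF
  -- counting: faces of (w,e) via (e,w)
  have hstEW : SameFace e w s t := Or.inl ⟨0, by simp [hest]⟩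
  have hsuEW : SameFace e w s (w s) :=
    Or.inl ⟨1, by simp [Equiv.Perm.mul_apply, he.1]⟩
  have hFacesWE : numFaces (S \ {s, t}) (removeP w s t) (removeP e s t) = numFaces S w e := by
    rw [numFaces_comm _ hWW hEE, numFaces_comm S hww hee]
    unfold numFaces faces faceOf
    exact count_eq S (SameFace e w) (SameFace (removeP e s t) (removeP w s t)) s t hs htS
      (fun h => sameFace_symm hee hww h) (fun h1 h2 => sameFace_trans hee hww h1 h2)
      (sameFace_refl e w) hstEW (heqMixed e he.1 hest hee hEE) (w s) hwsS' hsuEW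
  -- counting: faces of (b,e) (the black leaf vertex disappears)
  have horbBE : ∀ g ∈ Subgroup.closure ({b, e} : Set (Equiv.Perm α)),
      (g s = s ∨ g s = t) ∧ (g t = s ∨ g t = t) := by
    intro g hg
    refine Subgroup.closure_induction ?_ ?_ ?_ ?_ hg
    · rintro p (rfl | rfl)
      · exact ⟨Or.inr hbst, Or.inl hbt⟩
      · exact ⟨Or.inr hest, Or.inl het⟩
    · simp
    · rintro p q _ _ ⟨hp1, hp2⟩ ⟨hq1, hq2⟩
      constructor
      · rw [Equiv.Perm.mul_apply]
        rcases hq1 with h | h <;> rw [h]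
        · exact hp1
        · exact hp2
      · rw [Equiv.Perm.mul_apply]
        rcases hq2 with h | h <;> rw [h]
        · exact hp1
        · exact hp2
    · rintro p _ ⟨hp1, hp2⟩
      have key : ∀ u v : α, p u = v → p⁻¹ v = u := fun u v h => by
        rw [← h]; exact Equiv.symm_apply_apply p u
      rcases hp1 with h1 | h1 <;> rcases hp2 with h2 | h2
      · exact absurd (p.injective (h1.trans h2.symm)) hnst
      · exact ⟨Or.inl (key _ _ h1), Or.inr (key _ _ h2)⟩
      · exact ⟨Or.inr (key _ _ h2), Or.inl (key _ _ h1)⟩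
      · exact absurd (p.injective (h2.trans h1.symm)).symm hnst
  have hisoBE : ∀ u ∈ S \ ({s, t} : Finset α), ¬ SameFace b e s u := by
    intro u hu hcon
    obtain ⟨g, hg, hgu⟩ := (sameFace_iff_orbit hbb hee s u).1 hcon
    have := (horbBE g hg).1
    have hu2 := (Finset.mem_sdiff.1 hu).2
    simp only [Finset.mem_insert, Finset.mem_singleton] at hu2
    rw [hgu] at this
    tauto
  have hstBE : SameFace b e s t := Or.inl ⟨0, by simp [hbst]⟩
  have hFacesBE : numFaces S b e = numFaces (S \ {s, t}) (removeP b s t) (removeP e s t) + 1 := by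
    unfold numFaces faces faceOf
    exact count_pred S (SameFace b e) (SameFace (removeP b s t) (removeP e s t)) s t hs htS
      (fun h => sameFace_symm hbb hee h) (fun h1 h2 => sameFace_trans hbb hee h1 h2)
      (sameFace_refl b e) hstBE heqBE hisoBE
  -- counting: components
  have hstC : SameComponent b w e s t := ⟨e, Subgroup.subset_closure (by simp), hest⟩
  have hsuC : SameComponent b w e s (w s) := ⟨w, Subgroup.subset_closure (by simp), rfl⟩
  have hComp : numComponents (S \ {s, t}) (removeP b s t) (removeP w s t) (removeP e s t)
      = numComponents S b w e := by
    unfold numComponents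
    exact count_eq S (SameComponent b w e)
      (SameComponent (removeP b s t) (removeP w s t) (removeP e s t)) s t hs htS
      (fun h => sameComponent_symm h) (fun h1 h2 => sameComponent_trans h1 h2)
      (sameComponent_refl b w e) hstC heqC (w s) hwsS' hsuC
  -- edges
  have hsub : ({s, t} : Finset α) ⊆ S := by
    intro x hx
    simp only [Finset.mem_insert, Finset.mem_singleton] at hx
    rcases hx with rfl | rfl
    · exact hs
    · exact htS
  have hcard2 : ({s, t} : Finset α).card = 2 := by
    rw [Finset.card_insert_of_notMem (by simp [hnst]), Finset.card_singleton]
  have hcard : (S \ ({s, t} : Finset α)).card = S.card - 2 := by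
    rw [Finset.card_sdiff_of_subset hsub, hcard2]
  have h2le : 2 ≤ S.card := hcard2 ▸ Finset.card_le_card hsub
  have hEdges : numEdges S = numEdges (S \ {s, t}) + 1 := by
    unfold numEdges
    rw [hcard]
    omega
  refine ⟨?_, hEdges, hFaces, ?_, hComp⟩
  · unfold numVertices
    rw [hFacesBE, hFacesWE]
    omega
  · rw [numFaces_comm _ hWW hBB, numFaces_comm S hww hbb, hFaces]

/-- if exactly one extremity of the edge `E₀ = {s, e s}` of the map
`M = (S,b,w,e)` is a leaf, then `E₀` is straight, and `M \ E₀` has one fewer vertex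
and one fewer edge than `M`, while the numbers of faces and of connected components
are unchanged; consequently `d(M \ E₀) = d(M)`. -/
theorem remove_edge_one_leaf (S : Finset α) (b w e : Equiv.Perm α)
    (hb : IsPairing S b) (hw : IsPairing S w) (he : IsPairing S e)
    (s : α) (hs : s ∈ S)
    (hleaf : (b s = e s ∧ w s ≠ e s) ∨ (b s ≠ e s ∧ w s = e s)) :
    IsStraight b w s (e s) ∧
    numVertices S b w e
      = numVertices (S \ {s, e s}) (removeP b s (e s)) (removeP w s (e s))
          (removeP e s (e s)) + 1 ∧
    numEdges S = numEdges (S \ {s, e s}) + 1 ∧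
    numFaces (S \ {s, e s}) (removeP b s (e s)) (removeP w s (e s)) = numFaces S b w ∧
    numComponents (S \ {s, e s}) (removeP b s (e s)) (removeP w s (e s))
        (removeP e s (e s)) = numComponents S b w e ∧
    dInv (S \ {s, e s}) (removeP b s (e s)) (removeP w s (e s)) (removeP e s (e s))
      = dInv S b w e := by
  rcases hleaf with ⟨hbs, hws⟩ | ⟨hbs, hws⟩
  · obtain ⟨m1, m2, m3, _, m5⟩ := main_caseA S b w e hb hw he s (e s) hs rfl hbs hws
    refine ⟨⟨Or.inl ⟨0, by simp [hbs]⟩, ⟨0, by simp [hbs]⟩⟩, m1, m2, m3, m5, ?_⟩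
    unfold dInv eulerChar
    rw [m3, m5, m1, m2]
    push_cast
    ring
  · obtain ⟨m1, m2, _, m4, m5⟩ := main_caseA S w b e hw hb he s (e s) hs rfl hws hbs
    have ev : EvenPos b w s (e s) := ⟨1, by simp [Equiv.Perm.mul_apply, hb.1, hws]⟩
    have hvc : numVertices S b w e = numVertices S w b e := Nat.add_comm _ _
    have hvc' : numVertices (S \ {s, e s}) (removeP b s (e s)) (removeP w s (e s))
          (removeP e s (e s))
        = numVertices (S \ {s, e s}) (removeP w s (e s)) (removeP b s (e s))
          (removeP e s (e s)) := Nat.add_comm _ _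
    have m1' : numVertices S b w e
        = numVertices (S \ {s, e s}) (removeP b s (e s)) (removeP w s (e s))
            (removeP e s (e s)) + 1 := by
      rw [hvc, hvc', m1]
    have m5' : numComponents (S \ {s, e s}) (removeP b s (e s)) (removeP w s (e s))
          (removeP e s (e s)) = numComponents S b w e :=
      (numComponents_comm _ _ _ _).trans (m5.trans (numComponents_comm _ _ _ _))
    refine ⟨⟨Or.inl ev, ev⟩, m1', m2, m4, m5', ?_⟩
    unfold dInv eulerChar
    rw [m4, m5', m1', m2]
    push_cast
    ring

end
end

section
/- Let M be a map and let E0 be a straight edge of M none of whose extremities is a leaf. Then M \ E0 has one fewer edge and one more face than M, the same number of vertices, and its number of connected components either equals that of M or exceeds it by 1; consequently d(M \ E0) ∈ {d(M) − 2, d(M)}. -/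
open Equiv Polynomial

open scoped Classical

noncomputable section

variable {α : Type*}

namespace RemoveAux

open Relation

def Stp (l : List (Equiv.Perm α)) (x y : α) : Prop := ∃ f ∈ l, y = f x

lemma stp_symm {l : List (Equiv.Perm α)} (hl : ∀ f ∈ l, ∀ a, f (f a) = a) :
    Symmetric (Stp l) := by
  rintro x y ⟨f, hf, rfl⟩; exact ⟨f, hf, (hl f hf x).symm⟩

variable {b w e : Equiv.Perm α}

lemma mul_self_eq_one (hb : ∀ a, b (b a) = a) : b * b = 1 := by
  ext a; simpa using hb a

lemma inv_eq_self (hb : ∀ a, b (b a) = a) : b⁻¹ = b := by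
  rw [eq_comm, eq_inv_iff_mul_eq_one, mul_self_eq_one hb]

lemma hconjb (hb : ∀ a, b (b a) = a) (hw : ∀ a, w (w a) = a) (j : ℤ) :
    b * (w * b) ^ j = (w * b) ^ (-j) * b := by
  have hb1 := mul_self_eq_one hb
  have hkey : b * (w * b) * b⁻¹ = (w * b)⁻¹ := by
    rw [inv_eq_self hb, mul_inv_rev, inv_eq_self hb, inv_eq_self hw]
    ext a; simp [Equiv.Perm.mul_apply, hb]
  have h2 : (b * (w * b) * b⁻¹) ^ j = b * (w * b) ^ j * b⁻¹ := conj_zpow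
  rw [hkey, inv_zpow, ← zpow_neg] at h2
  rw [h2, inv_eq_self hb, mul_assoc, hb1, mul_one]

lemma hconjw (hb : ∀ a, b (b a) = a) (hw : ∀ a, w (w a) = a) (j : ℤ) :
    w * (w * b) ^ j = (w * b) ^ (-j) * w := by
  have hw1 := mul_self_eq_one hw
  have hkey : w * (w * b) * w⁻¹ = (w * b)⁻¹ := by
    rw [inv_eq_self hw, mul_inv_rev, inv_eq_self hb, inv_eq_self hw]
    ext a; simp [Equiv.Perm.mul_apply, hw]
  have h2 : (w * (w * b) * w⁻¹) ^ j = w * (w * b) ^ j * w⁻¹ := conj_zpow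
  rw [hkey, inv_zpow, ← zpow_neg] at h2
  rw [h2, inv_eq_self hw, mul_assoc, hw1, mul_one]

lemma zpow_reach (hb : ∀ a, b (b a) = a) (hw : ∀ a, w (w a) = a)
    (x : α) : ∀ j : ℤ, ReflTransGen (Stp [b, w]) x (((w * b) ^ j) x) := by
  intro j
  induction j using Int.induction_on with
  | zero => simpa using ReflTransGen.refl
  | succ k ih =>
      have h1 : ((w * b) ^ ((k : ℤ) + 1)) x = w (b (((w * b) ^ (k : ℤ)) x)) := by
        rw [add_comm, zpow_add, zpow_one]
        simp [Equiv.Perm.mul_apply]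
      rw [h1]
      exact (ih.tail ⟨b, by simp, rfl⟩).tail ⟨w, by simp, rfl⟩
  | pred k ih =>
      have hm : (w * b) ^ (-1 : ℤ) = b * w := by
        rw [zpow_neg, zpow_one, mul_inv_rev, inv_eq_self hb, inv_eq_self hw]
      have h1 : ((w * b) ^ (-(k : ℤ) - 1)) x = b (w (((w * b) ^ (-(k : ℤ))) x)) := by
        rw [sub_eq_add_neg, add_comm, zpow_add, hm]
        simp [Equiv.Perm.mul_apply]
      rw [h1]
      exact (ih.tail ⟨w, by simp, rfl⟩).tail ⟨b, by simp, rfl⟩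

lemma sameFace_iff (hb : ∀ a, b (b a) = a) (hw : ∀ a, w (w a) = a) (x y : α) :
    SameFace b w x y ↔ ReflTransGen (Stp [b, w]) x y := by
  have hb1 : b * b = 1 := mul_self_eq_one hb
  have A3 : ∀ j : ℤ, b * ((w * b) ^ j * b) = (w * b) ^ (-j) := by
    intro j; rw [← mul_assoc, hconjb hb hw, mul_assoc, hb1, mul_one]
  have A2 : ∀ j : ℤ, w * (w * b) ^ j = (w * b) ^ (-j + 1) * b := by
    intro j
    rw [hconjw hb hw, zpow_add_one, mul_assoc, mul_assoc, hb1, mul_one]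
  have A4 : ∀ j : ℤ, w * ((w * b) ^ j * b) = (w * b) ^ (-j + 1) := by
    intro j
    rw [← mul_assoc, A2 j, mul_assoc, hb1, mul_one]
  have hstepb : ∀ z, SameFace b w x z → SameFace b w x (b z) := by
    rintro z (⟨j, rfl⟩ | ⟨j, rfl⟩)
    · exact Or.inr ⟨-j, by rw [← Equiv.Perm.mul_apply, A3 j]⟩
    · exact Or.inl ⟨-j, by rw [← Equiv.Perm.mul_apply, hconjb hb hw j]⟩
  have hstepw : ∀ z, SameFace b w x z → SameFace b w x (w z) := by
    rintro z (⟨j, rfl⟩ | ⟨j, rfl⟩)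
    · exact Or.inr ⟨-j + 1, by rw [← Equiv.Perm.mul_apply, A4 j]⟩
    · exact Or.inl ⟨-j + 1, by rw [← Equiv.Perm.mul_apply, A2 j]⟩
  constructor
  · rintro (⟨j, rfl⟩ | ⟨j, rfl⟩)
    · have h5 : ((w * b) ^ j * b) x = ((w * b) ^ j) (b x) := by
        simp [Equiv.Perm.mul_apply]
      rw [h5]
      exact (ReflTransGen.single ⟨b, by simp, rfl⟩).trans (zpow_reach hb hw (b x) j)
    · exact zpow_reach hb hw x j
  · intro h
    induction h with
    | refl => exact Or.inr ⟨0, by simp⟩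
    | @tail c d _ hstep ih =>
        rcases hstep with ⟨f, hf, rfl⟩
        simp only [List.mem_cons, List.not_mem_nil, or_false] at hf
        rcases hf with hf | hf
        · rw [hf]; exact hstepb c ih
        · rw [hf]; exact hstepw c ih

lemma sameComponent_iff (hb : ∀ a, b (b a) = a) (hw : ∀ a, w (w a) = a)
    (he : ∀ a, e (e a) = a) (x y : α) :
    SameComponent b w e x y ↔ ReflTransGen (Stp [b, w, e]) x y := by
  have hsym : Symmetric (Stp [b, w, e]) := by
    apply stp_symm; intro f hf
    simp only [List.mem_cons, List.not_mem_nil, or_false] at hf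
    rcases hf with hf | hf | hf
    · rw [hf]; exact hb
    · rw [hf]; exact hw
    · rw [hf]; exact he
  constructor
  · rintro ⟨g, hg, rfl⟩
    revert x
    induction hg using Subgroup.closure_induction with
    | mem f hf =>
        intro x
        refine ReflTransGen.single ⟨f, ?_, rfl⟩
        simp only [Set.mem_insert_iff, Set.mem_singleton_iff] at hf
        rcases hf with hf | hf | hf <;> simp [hf]
    | one => intro x; simpa using ReflTransGen.refl
    | mul g h _ _ pg ph =>
        intro x
        have h6 : (g * h) x = g (h x) := rfl
        rw [h6]
        exact (ph x).trans (pg (h x))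
    | inv g _ pg =>
        intro x
        have := pg (g⁻¹ x)
        simp only [show g (g⁻¹ x) = x from Equiv.apply_symm_apply g x] at this
        exact (@ReflTransGen.stdSymm _ _ ⟨fun _ _ h => hsym h⟩).symm _ _ this
  · intro h
    induction h with
    | refl => exact ⟨1, Subgroup.one_mem _, rfl⟩
    | @tail c d _ hstep ih =>
        rcases ih with ⟨g, hg, rfl⟩
        rcases hstep with ⟨f, hf, rfl⟩
        refine ⟨f * g, Subgroup.mul_mem _ (Subgroup.subset_closure ?_) hg, rfl⟩
        simp only [List.mem_cons, List.not_mem_nil, or_false] at hf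
        rcases hf with hf | hf | hf <;> simp [hf]



lemma filter_eq_of_equiv {R : α → α → Prop} (hR : Equivalence R) (S : Finset α)
    {x y : α} (h : R x y) : S.filter (R x) = S.filter (R y) := by
  apply Finset.filter_congr
  intro z _
  constructor
  · intro hz; exact hR.trans (hR.symm h) hz
  · intro hz; exact hR.trans h hz

lemma split_count (S' S : Finset α) {R R' : α → α → Prop}
    (hR : Equivalence R) (hR' : Equivalence R')
    (s : α) (hsS : s ∈ S) (hS'S : S' ⊆ S)
    (hrm : ∀ x ∈ S, x ∉ S' → R x s)
    (t1 u1 : α) (ht1 : t1 ∈ S') (hu1 : u1 ∈ S') (hRst1 : R s t1) (hRsu1 : R s u1)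
    (hR'R : ∀ x ∈ S', ∀ y ∈ S', R' x y → R x y)
    (huntouched : ∀ x ∈ S', ∀ y ∈ S', ¬R x s → R x y → R' x y)
    (hcover : ∀ x ∈ S', R x s → (R' t1 x ∨ R' u1 x)) :
    (S'.image fun x => S'.filter (R' x)).card
      = (S.image fun x => S.filter (R x)).card + (if R' t1 u1 then 0 else 1) := by
  set f : α → Finset α := fun x => S.filter (R x) with hf
  set f' : α → Finset α := fun x => S'.filter (R' x) with hf'
  set T : Finset (Finset α) := (S.filter fun x => ¬R x s).image f with hT
  -- elements with class away from s keep their class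
  have fx_eq : ∀ x ∈ S', ¬R x s → f x = f' x := by
    intro x hx hxs
    ext y
    simp only [hf, hf', Finset.mem_filter]
    constructor
    · rintro ⟨hyS, hxy⟩
      have hyS' : y ∈ S' := by
        by_contra hy'
        exact hxs (hR.trans hxy (hrm y hyS hy'))
      exact ⟨hyS', huntouched x hx y hyS' hxs hxy⟩
    · rintro ⟨hyS', hxy⟩
      exact ⟨hS'S hyS', hR'R x hx y hyS' hxy⟩
  have hmem_not : ∀ x ∈ S, ¬R x s → x ∈ S' := by
    intro x hx hxs
    by_contra h
    exact hxs (hrm x hx h)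
  -- old classes
  have hold : S.image f = insert (f s) T := by
    ext C
    simp only [Finset.mem_image, Finset.mem_insert, hT, Finset.mem_filter]
    constructor
    · rintro ⟨x, hx, rfl⟩
      by_cases hxs : R x s
      · left; exact filter_eq_of_equiv hR S hxs
      · right; exact ⟨x, ⟨hx, hxs⟩, rfl⟩
    · rintro (rfl | ⟨x, ⟨hx, hxs⟩, rfl⟩)
      · exact ⟨s, hsS, rfl⟩
      · exact ⟨x, hx, rfl⟩
  have hnew : S'.image f' = insert (f' t1) (insert (f' u1) T) := by
    ext C
    simp only [Finset.mem_image, Finset.mem_insert, hT, Finset.mem_filter]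
    constructor
    · rintro ⟨x, hx, rfl⟩
      by_cases hxs : R x s
      · rcases hcover x hx hxs with h | h
        · left; exact (filter_eq_of_equiv hR' S' h).symm
        · right; left; exact (filter_eq_of_equiv hR' S' h).symm
      · right; right; exact ⟨x, ⟨hS'S hx, hxs⟩, (fx_eq x hx hxs)⟩
    · rintro (rfl | rfl | ⟨x, ⟨hx, hxs⟩, rfl⟩)
      · exact ⟨t1, ht1, rfl⟩
      · exact ⟨u1, hu1, rfl⟩
      · have hx' := hmem_not x hx hxs
        exact ⟨x, hx', (fx_eq x hx' hxs).symm⟩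
  -- non-membership facts
  have hfs_notT : f s ∉ T := by
    intro h
    rw [hT] at h
    rcases Finset.mem_image.mp h with ⟨x, hx, hxe⟩
    rw [Finset.mem_filter] at hx
    have : s ∈ f x := by rw [hxe]; simp [hf, hsS, hR.refl s]
    simp only [hf, Finset.mem_filter] at this
    exact hx.2 (this.2)
  have hft1_notT : f' t1 ∉ T := by
    intro h
    rcases Finset.mem_image.mp h with ⟨x, hx, hxe⟩
    rw [Finset.mem_filter] at hx
    have ht1m : t1 ∈ f x := by rw [hxe]; simp [hf', ht1, hR'.refl t1]
    simp only [hf, Finset.mem_filter] at ht1m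
    exact hx.2 (hR.trans ht1m.2 (hR.symm hRst1))
  have hfu1_notT : f' u1 ∉ T := by
    intro h
    rcases Finset.mem_image.mp h with ⟨x, hx, hxe⟩
    rw [Finset.mem_filter] at hx
    have hu1m : u1 ∈ f x := by rw [hxe]; simp [hf', hu1, hR'.refl u1]
    simp only [hf, Finset.mem_filter] at hu1m
    exact hx.2 (hR.trans hu1m.2 (hR.symm hRsu1))
  have hiff : f' t1 = f' u1 ↔ R' t1 u1 := by
    constructor
    · intro h
      have : u1 ∈ f' u1 := by simp [hf', hu1, hR'.refl u1]
      rw [← h] at this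
      simp only [hf', Finset.mem_filter] at this
      exact this.2
    · intro h; exact filter_eq_of_equiv hR' S' h
  rw [hold, hnew]
  rw [Finset.card_insert_of_notMem hfs_notT]
  by_cases hc : R' t1 u1
  · rw [if_pos hc]
    have : f' t1 = f' u1 := hiff.mpr hc
    rw [this, Finset.insert_idem, Finset.card_insert_of_notMem hfu1_notT]
  · rw [if_neg hc]
    have hne : f' t1 ≠ f' u1 := fun h => hc (hiff.mp h)
    have hnm : f' t1 ∉ insert (f' u1) T := by
      simp only [Finset.mem_insert]
      push_neg
      exact ⟨hne, hft1_notT⟩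
    rw [Finset.card_insert_of_notMem hnm, Finset.card_insert_of_notMem hfu1_notT]



variable {s es : α}

lemma removeP_spec (hb : ∀ a, b (b a) = a) (hses : s ≠ es) (h1 : b s ≠ es)
    (hbs : b s ≠ s) (hbes : b es ≠ es) :
    removeP b s es s = s ∧ removeP b s es es = es ∧
    removeP b s es (b s) = b es ∧ removeP b s es (b es) = b s ∧
    ∀ x, x ≠ s → x ≠ es → x ≠ b s → x ≠ b es → removeP b s es x = b x := by
  have hinj : Function.Injective b := b.injective
  have h2 : b es ≠ s := fun h => h1 (by rw [← h, hb])
  have h3 : b s ≠ b es := fun h => hses (hinj h)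
  refine ⟨?_, ?_, ?_, ?_, ?_⟩
  · show (Equiv.swap s es * Equiv.swap s (b es) * Equiv.swap es (b s) * b) s = s
    simp only [Equiv.Perm.mul_apply]
    rw [Equiv.swap_apply_right, Equiv.swap_apply_of_ne_of_ne (Ne.symm hses)
      (Ne.symm hbes), Equiv.swap_apply_right]
  · show (Equiv.swap s es * Equiv.swap s (b es) * Equiv.swap es (b s) * b) es = es
    simp only [Equiv.Perm.mul_apply]
    rw [Equiv.swap_apply_of_ne_of_ne hbes (Ne.symm h3), Equiv.swap_apply_right,
      Equiv.swap_apply_left]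
  · show (Equiv.swap s es * Equiv.swap s (b es) * Equiv.swap es (b s) * b) (b s)
      = b es
    simp only [Equiv.Perm.mul_apply, hb s]
    rw [Equiv.swap_apply_of_ne_of_ne hses (Ne.symm hbs), Equiv.swap_apply_left,
      Equiv.swap_apply_of_ne_of_ne h2 hbes]
  · show (Equiv.swap s es * Equiv.swap s (b es) * Equiv.swap es (b s) * b) (b es)
      = b s
    simp only [Equiv.Perm.mul_apply, hb es]
    rw [Equiv.swap_apply_left, Equiv.swap_apply_of_ne_of_ne hbs h3,
      Equiv.swap_apply_of_ne_of_ne hbs h1]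
  · intro x hx1 hx2 hx3 hx4
    show (Equiv.swap s es * Equiv.swap s (b es) * Equiv.swap es (b s) * b) x = b x
    simp only [Equiv.Perm.mul_apply]
    have e1 : b x ≠ es := fun h => hx4 (by rw [← hb x, h])
    have e2 : b x ≠ b s := fun h => hx1 (hinj h)
    have e3 : b x ≠ s := fun h => hx3 (by rw [← hb x, h])
    have e4 : b x ≠ b es := fun h => hx2 (hinj h)
    rw [Equiv.swap_apply_of_ne_of_ne e1 e2, Equiv.swap_apply_of_ne_of_ne e3 e4,
      Equiv.swap_apply_of_ne_of_ne e3 e1]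

lemma removeP_invol (hb : ∀ a, b (b a) = a) (hses : s ≠ es) (h1 : b s ≠ es)
    (hbs : b s ≠ s) (hbes : b es ≠ es) :
    ∀ a, removeP b s es (removeP b s es a) = a := by
  obtain ⟨q1, q2, q3, q4, q5⟩ := removeP_spec hb hses h1 hbs hbes
  have hinj : Function.Injective b := b.injective
  intro a
  by_cases ha1 : a = s; · rw [ha1, q1, q1]
  by_cases ha2 : a = es; · rw [ha2, q2, q2]
  by_cases ha3 : a = b s; · rw [ha3, q3, q4]
  by_cases ha4 : a = b es; · rw [ha4, q4, q3]
  rw [q5 a ha1 ha2 ha3 ha4]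
  have e1 : b a ≠ es := fun h => ha4 (by rw [← hb a, h])
  have e2 : b a ≠ b s := fun h => ha1 (hinj h)
  have e3 : b a ≠ s := fun h => ha3 (by rw [← hb a, h])
  have e4 : b a ≠ b es := fun h => ha2 (hinj h)
  rw [q5 _ e3 e1 e2 e4, hb]

lemma removeP_edge_spec (he : ∀ a, e (e a) = a) (hses : s ≠ e s) :
    removeP e s (e s) s = s ∧ removeP e s (e s) (e s) = e s ∧
    ∀ x, x ≠ s → x ≠ e s → removeP e s (e s) x = e x := by
  have hre : ∀ a, removeP e s (e s) a = Equiv.swap s (e s) (e a) := by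
    intro a
    show (Equiv.swap s (e s) * Equiv.swap s (e (e s)) * Equiv.swap (e s) (e s) * e) a
      = _
    rw [he s, Equiv.swap_self, Equiv.swap_self]
    simp [Equiv.Perm.mul_apply]
  refine ⟨?_, ?_, ?_⟩
  · rw [hre, Equiv.swap_apply_right]
  · rw [hre, he s, Equiv.swap_apply_left]
  · intro x hx1 hx2
    rw [hre]
    have e1 : e x ≠ s := fun h => hx2 (by rw [← he x, h])
    have e2 : e x ≠ e s := fun h => hx1 (e.injective h)
    rw [Equiv.swap_apply_of_ne_of_ne e1 e2]

lemma removeP_edge_invol (he : ∀ a, e (e a) = a) (hses : s ≠ e s) :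
    ∀ a, removeP e s (e s) (removeP e s (e s) a) = a := by
  obtain ⟨q1, q2, q3⟩ := removeP_edge_spec he hses
  intro a
  by_cases ha1 : a = s; · rw [ha1, q1, q1]
  by_cases ha2 : a = e s; · rw [ha2, q2, q2]
  rw [q3 a ha1 ha2]
  have e1 : e a ≠ s := fun h => ha2 (by rw [← he a, h])
  have e2 : e a ≠ e s := fun h => ha1 (e.injective h)
  rw [q3 _ e1 e2, he]


end RemoveAux

namespace RemoveAux

open Relation

variable {S : Finset α} {b w : Equiv.Perm α}

lemma pairing_mem {f : Equiv.Perm α} (hf : IsPairing S f) {x : α} (hx : x ∈ S) :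
    f x ∈ S := by
  rw [← hf.2]
  intro h
  have h2 : f (f x) = f x := by rw [h]
  rw [hf.1] at h2
  exact ((hf.2 x).mpr hx) h2.symm

lemma face_sep (hbp : IsPairing S b) (hwp : IsPairing S w) {s es : α}
    (hsS : s ∈ S) (hesS : es ∈ S)
    (hEP : ∃ j : ℤ, es = ((w * b) ^ j * b) s)
    (hbse : b s ≠ es) (hwse : w s ≠ es) (hses : s ≠ es) :
    ¬ Relation.ReflTransGen (Stp [removeP b s es, removeP w s es]) (b s) (w s) := by
  have hb := hbp.1
  have hw := hwp.1
  set c : Equiv.Perm α := w * b with hc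
  obtain ⟨j, hj⟩ := hEP
  rw [Equiv.Perm.mul_apply] at hj
  have capp : ∀ (a d : ℤ) (x : α), (c ^ a) ((c ^ d) x) = (c ^ (a + d)) x := by
    intro a d x; rw [← Equiv.Perm.mul_apply, ← zpow_add]
  have ceq : ∀ {a a' : ℤ} (x : α), a = a' → (c ^ a) x = (c ^ a') x := by
    rintro a a' x rfl; rfl
  have bapp : ∀ (k : ℤ) (x : α), b ((c ^ k) x) = (c ^ (-k)) (b x) := by
    intro k x
    rw [← Equiv.Perm.mul_apply, hc, hconjb hb hw k, Equiv.Perm.mul_apply]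
  have wapp : ∀ (k : ℤ) (x : α), w ((c ^ k) x) = (c ^ (-k)) (w x) := by
    intro k x
    rw [← Equiv.Perm.mul_apply, hc, hconjw hb hw k, Equiv.Perm.mul_apply]
  have co_s : (c ^ (0 : ℤ)) s = s := by simp
  have co_bs : (c ^ (0 : ℤ)) (b s) = b s := by simp
  have co_es : es = (c ^ j) (b s) := hj
  have co_bes : b es = (c ^ (-j)) s := by rw [hj, bapp, hb]
  have co_ws : w s = (c ^ (1 : ℤ)) (b s) := by
    rw [zpow_one, hc, Equiv.Perm.mul_apply, hb]
  have co_cs : (c ^ (1 : ℤ)) s = w (b s) := by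
    rw [zpow_one, hc, Equiv.Perm.mul_apply]
  have co_wes : w es = (c ^ (-j + 1)) s := by
    rw [hj, wapp, ← co_cs, capp]
  have hbS : ∀ x ∈ S, b x ∈ S := fun x hx => pairing_mem hbp hx
  have hwS : ∀ x ∈ S, w x ∈ S := fun x hx => pairing_mem hwp hx
  have hcS : ∀ x ∈ S, c x ∈ S := by
    intro x hx
    rw [hc]; exact hwS _ (hbS _ hx)
  have hcS' : ∀ x ∈ S, c⁻¹ x ∈ S := by
    intro x hx
    have h1 : c (b (w x)) = x := by
      rw [hc]; simp only [Equiv.Perm.mul_apply]; rw [hb, hw]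
    have h2 : c⁻¹ x = b (w x) := by
      apply c.injective
      rw [show c (c⁻¹ x) = x from Equiv.apply_symm_apply c x, h1]
    rw [h2]; exact hbS _ (hwS _ hx)
  have memS : ∀ (k : ℤ), ∀ x ∈ S, (c ^ k) x ∈ S := by
    intro k
    induction k using Int.induction_on with
    | zero => intro x hx; simpa using hx
    | succ m ih =>
        intro x hx
        have h1 : (c ^ ((m : ℤ) + 1)) x = (c ^ (m : ℤ)) (c x) := by
          rw [← Equiv.Perm.mul_apply, ← zpow_add_one]
        rw [h1]; exact ih _ (hcS _ hx)
    | pred m ih =>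
        intro x hx
        have h1 : (c ^ (-(m : ℤ) - 1)) x = (c ^ (-(m : ℤ))) (c⁻¹ x) := by
          rw [← Equiv.Perm.mul_apply, ← zpow_sub_one]
        rw [h1]; exact ih _ (hcS' _ hx)
  have hbsS : b s ∈ S := hbS s hsS
  have iterS : ∀ (k : ℕ), ∀ x ∈ S, (⇑c)^[k] x ∈ S := by
    intro k
    induction k with
    | zero => intro x hx; simpa using hx
    | succ m ih =>
        intro x hx
        rw [Function.iterate_succ_apply']
        exact hcS _ (ih x hx)
  have hper : ∃ m : ℕ, 0 < m ∧ (⇑c)^[m] (b s) = b s := by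
    obtain ⟨i, hi, i', hi', hne, heq⟩ :=
      Finset.exists_ne_map_eq_of_card_lt_of_maps_to
        (s := Finset.range (S.card + 1)) (t := S)
        (by simp) (fun k _ => iterS k (b s) hbsS)
    rcases hne.lt_or_gt with hlt | hlt
    · refine ⟨i' - i, by omega, ?_⟩
      have h1 : (⇑c)^[i + (i' - i)] (b s) = (⇑c)^[i] ((⇑c)^[i' - i] (b s)) :=
        Function.iterate_add_apply _ _ _ _
      have h2 : i + (i' - i) = i' := by omega
      rw [h2] at h1
      exact (c.injective.iterate i) (by rw [← h1, heq])
    · refine ⟨i - i', by omega, ?_⟩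
      have h1 : (⇑c)^[i' + (i - i')] (b s) = (⇑c)^[i'] ((⇑c)^[i - i'] (b s)) :=
        Function.iterate_add_apply _ _ _ _
      have h2 : i' + (i - i') = i := by omega
      rw [h2] at h1
      exact (c.injective.iterate i') (by rw [← h1, ← heq])
  obtain ⟨m₀, hm₀, hm₀e⟩ := hper
  set n : ℕ := Function.minimalPeriod (⇑c) (b s) with hn
  have hn0 : 0 < n := Function.IsPeriodicPt.minimalPeriod_pos hm₀ hm₀e
  set N : ℤ := (n : ℤ) with hN
  have hN0 : 0 < N := by rw [hN]; exact_mod_cast hn0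
  have hNfix : (c ^ N) (b s) = b s := by
    rw [hN, zpow_natCast, ← Equiv.Perm.iterate_eq_pow]
    exact Function.iterate_minimalPeriod
  have fixmod : ∀ (x : α), (c ^ N) x = x → ∀ k : ℤ, (c ^ k) x = (c ^ (k % N)) x := by
    intro x hx k
    conv_lhs => rw [← Int.emod_add_mul_ediv k N]
    rw [← capp]
    congr 1
    rw [zpow_mul]
    exact Equiv.Perm.zpow_apply_eq_self_of_apply_eq_self hx _
  have hNfixs : (c ^ N) s = s := by
    have hd0 : (-N) % N = 0 := by
      rw [show -N = 0 + N * (-1) by ring, Int.add_mul_emod_self_left, Int.zero_emod]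
    have h1 : (c ^ (-N)) (b s) = b s := by
      rw [fixmod _ hNfix, hd0]
      simp
    have h2 := bapp (-N) (b s)
    rw [h1, neg_neg, hb] at h2
    exact h2.symm
  have hmod : ∀ k m : ℤ, (c ^ k) (b s) = (c ^ m) (b s) ↔ k % N = m % N := by
    intro k m
    constructor
    · intro h
      rw [fixmod _ hNfix k, fixmod _ hNfix m] at h
      have ha : 0 ≤ k % N := Int.emod_nonneg _ hN0.ne'
      have ha' : k % N < N := Int.emod_lt_of_pos _ hN0
      have hd : 0 ≤ m % N := Int.emod_nonneg _ hN0.ne'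
      have hd' : m % N < N := Int.emod_lt_of_pos _ hN0
      rw [show k % N = ((k % N).toNat : ℤ) from (Int.toNat_of_nonneg ha).symm,
        show m % N = ((m % N).toNat : ℤ) from (Int.toNat_of_nonneg hd).symm,
        zpow_natCast, zpow_natCast, ← Equiv.Perm.iterate_eq_pow,
        ← Equiv.Perm.iterate_eq_pow] at h
      have := Function.iterate_injOn_Iio_minimalPeriod (f := ⇑c) (x := b s)
        (Set.mem_Iio.mpr (show (k % N).toNat < n by omega))
        (Set.mem_Iio.mpr (show (m % N).toNat < n by omega)) h
      omega
    · intro h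
      rw [fixmod _ hNfix k, fixmod _ hNfix m, h]
  have hmods : ∀ k m : ℤ, (c ^ k) s = (c ^ m) s ↔ k % N = m % N := by
    intro k m
    constructor
    · intro h
      have h2 := congrArg (⇑b) h
      rw [bapp, bapp] at h2
      have h3 := (hmod _ _).mp h2
      have h4 := Int.ModEq.neg (show Int.ModEq N (-k) (-m) from h3)
      rw [show -(-k) = k by ring, show -(-m) = m by ring] at h4
      exact h4
    · intro h
      rw [fixmod _ hNfixs k, fixmod _ hNfixs m, h]
  have hdisj : ∀ k m : ℤ, (c ^ k) (b s) ≠ (c ^ m) s := by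
    intro k m h
    have h2 := congrArg (⇑(c ^ (-k))) h
    rw [capp, capp] at h2
    have hM : b s = (c ^ (m - k)) s := by
      calc b s = (c ^ (0 : ℤ)) (b s) := co_bs.symm
        _ = (c ^ (-k + k)) (b s) := ceq _ (by ring)
        _ = (c ^ (-k + m)) s := h2
        _ = (c ^ (m - k)) s := ceq _ (by ring)
    rcases Int.even_or_odd (m - k) with ⟨q, hq⟩ | ⟨q, hq⟩
    · have hξ : b ((c ^ q) s) = (c ^ q) s := by
        rw [bapp, hM, capp]
        exact ceq _ (by omega)
      exact (hbp.2 _).mpr (memS q s hsS) hξ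
    · have hws2 : w s = (c ^ (m - k + 1)) s := by
        rw [co_ws, hM, capp]
        exact ceq _ (by ring)
      have hξ : w ((c ^ (q + 1)) s) = (c ^ (q + 1)) s := by
        rw [wapp, hws2, capp]
        exact ceq _ (by omega)
      exact (hwp.2 _).mpr (memS (q + 1) s hsS) hξ
  set J : ℤ := j % N with hJdef
  have hJlo : 0 ≤ J := Int.emod_nonneg _ hN0.ne'
  have hJhi : J < N := Int.emod_lt_of_pos _ hN0
  have hJ0 : J ≠ 0 := by
    intro h
    apply hbse
    have h1 : (c ^ j) (b s) = b s := by
      rw [fixmod _ hNfix j, ← hJdef, h]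
      simp
    rw [co_es, h1]
  have hN1 : (1 : ℤ) % N = 1 := by
    have hne1 : N ≠ 1 := by
      intro h
      apply hJ0
      rw [hJdef, h, Int.emod_one]
    exact Int.emod_eq_of_lt (by norm_num) (by omega)
  have hJ1 : J ≠ 1 := by
    intro h
    apply hwse
    have h1 : (c ^ (1 : ℤ)) (b s) = (c ^ j) (b s) := by
      apply (hmod 1 j).mpr
      rw [hN1, ← hJdef, h]
    rw [co_ws, h1, ← co_es]
  have hJ2 : 2 ≤ J := by omega
  set PY : ℤ → Prop := fun k => 1 ≤ k % N ∧ k % N < J with hPY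
  have py_congr : ∀ a d : ℤ, a % N = d % N → (PY a ↔ PY d) := by
    intro a d h
    simp only [hPY]
    rw [h]
  have py0 : ¬ PY 0 := by
    simp only [hPY]
    rw [Int.zero_emod]
    omega
  have py1 : PY 1 := by
    simp only [hPY]
    rw [hN1]
    omega
  have pyJ : ¬ PY j := by
    simp only [hPY]
    rw [← hJdef]
    omega
  have pyJm1 : PY (j - 1) := by
    have h2 : (j - 1) % N = (J - 1) % N :=
      Int.ModEq.sub_right 1 (show j % N = J % N by
        rw [Int.emod_eq_of_lt hJlo hJhi, hJdef])
    have h1 : (j - 1) % N = J - 1 := by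
      rw [h2, Int.emod_eq_of_lt (by omega) (by omega)]
    simp only [hPY]
    rw [h1]
    omega
  have py_step : ∀ k : ℤ, k % N ≠ 1 → k % N ≠ J → (PY k ↔ PY (k - 1)) := by
    intro k h1 h2
    have hklo : 0 ≤ k % N := Int.emod_nonneg _ hN0.ne'
    have hkhi : k % N < N := Int.emod_lt_of_pos _ hN0
    have hsub : (k - 1) % N = (k % N - 1) % N :=
      Int.ModEq.sub_right 1 (show k % N = (k % N) % N by
        rw [Int.emod_emod_of_dvd _ (dvd_refl N)])
    by_cases hk0 : k % N = 0
    · have h4 : ((k % N : ℤ) - 1) % N = (N - 1) % N := by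
        apply Int.modEq_iff_dvd.mpr
        refine ⟨1, ?_⟩
        rw [hk0]
        ring
      have h3 : (k - 1) % N = N - 1 := by
        rw [hsub, h4, Int.emod_eq_of_lt (by omega) (by omega)]
      simp only [hPY]
      rw [h3, hk0]
      omega
    · have h3 : (k - 1) % N = k % N - 1 := by
        rw [hsub, Int.emod_eq_of_lt (by omega) (by omega)]
      simp only [hPY]
      rw [h3]
      omega
  have hbss : b s ≠ s := (hbp.2 s).mpr hsS
  have hbeses : b es ≠ es := (hbp.2 es).mpr hesS
  obtain ⟨qb1, qb2, qb3, qb4, qb5⟩ := removeP_spec hb hses hbse hbss hbeses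
  have hwss : w s ≠ s := (hwp.2 s).mpr hsS
  have hweses : w es ≠ es := (hwp.2 es).mpr hesS
  obtain ⟨qw1, qw2, qw3, qw4, qw5⟩ := removeP_spec hw hses hwse hwss hweses
  set A : α → Prop := fun x =>
    (∃ k : ℤ, x = (c ^ k) (b s) ∧ ¬ PY k) ∨ (∃ m : ℤ, x = (c ^ m) s ∧ ¬ PY (-m))
    with hA
  have hAinvb : ∀ x, A x → A (removeP b s es x) := by
    rintro x (⟨k, rfl, hk⟩ | ⟨m, rfl, hm⟩)
    · by_cases hk0 : k % N = 0
      · have hx : (c ^ k) (b s) = b s := by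
          rw [fixmod _ hNfix k, hk0]
          simp
        rw [hx, qb3]
        refine Or.inr ⟨-j, co_bes, ?_⟩
        rw [neg_neg]
        exact pyJ
      · by_cases hkJ : k % N = J
        · have hx : (c ^ k) (b s) = es :=
            ((hmod k j).mpr (hkJ.trans hJdef)).trans co_es.symm
          rw [hx, qb2]
          exact Or.inl ⟨j, co_es, pyJ⟩
        · have hx1 : (c ^ k) (b s) ≠ s := fun h => hdisj k 0 (by rw [h, co_s])
          have hx2 : (c ^ k) (b s) ≠ es := fun h =>
            hkJ (((hmod k j).mp (h.trans co_es)).trans hJdef.symm)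
          have hx3 : (c ^ k) (b s) ≠ b s := fun h =>
            hk0 (((hmod k 0).mp (h.trans co_bs.symm)).trans (Int.zero_emod N))
          have hx4 : (c ^ k) (b s) ≠ b es := fun h => hdisj k (-j) (by rw [h, co_bes])
          rw [qb5 _ hx1 hx2 hx3 hx4, bapp, hb]
          refine Or.inr ⟨-k, rfl, ?_⟩
          rw [neg_neg]
          exact hk
    · by_cases hm0 : m % N = 0
      · have hx : (c ^ m) s = s := by
          rw [fixmod _ hNfixs m, hm0]
          simp
        rw [hx, qb1]
        exact Or.inr ⟨m, hx.symm, hm⟩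
      · by_cases hmj : m % N = (-j) % N
        · have hx : (c ^ m) s = b es := ((hmods m (-j)).mpr hmj).trans co_bes.symm
          rw [hx, qb4]
          exact Or.inl ⟨0, co_bs.symm, py0⟩
        · have hx1 : (c ^ m) s ≠ s := fun h =>
            hm0 (((hmods m 0).mp (h.trans co_s.symm)).trans (Int.zero_emod N))
          have hx2 : (c ^ m) s ≠ es := fun h => hdisj j m (by rw [← co_es, h])
          have hx3 : (c ^ m) s ≠ b s := fun h => hdisj 0 m (co_bs.trans h.symm)
          have hx4 : (c ^ m) s ≠ b es := fun h => hmj ((hmods m (-j)).mp (h.trans co_bes))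
          rw [qb5 _ hx1 hx2 hx3 hx4, bapp]
          exact Or.inl ⟨-m, rfl, hm⟩
  have hAinvw : ∀ x, A x → A (removeP w s es x) := by
    rintro x (⟨k, rfl, hk⟩ | ⟨m, rfl, hm⟩)
    · by_cases hk1 : k % N = 1
      · exact absurd ((py_congr k 1 (by rw [hk1, hN1])).mpr py1) hk
      · by_cases hkJ : k % N = J
        · have hx : (c ^ k) (b s) = es :=
            ((hmod k j).mpr (hkJ.trans hJdef)).trans co_es.symm
          rw [hx, qw2]
          exact Or.inl ⟨j, co_es, pyJ⟩
        · have hx1 : (c ^ k) (b s) ≠ s := fun h => hdisj k 0 (by rw [h, co_s])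
          have hx2 : (c ^ k) (b s) ≠ es := fun h =>
            hkJ (((hmod k j).mp (h.trans co_es)).trans hJdef.symm)
          have hx3 : (c ^ k) (b s) ≠ w s := fun h =>
            hk1 (((hmod k 1).mp (h.trans co_ws)).trans hN1)
          have hx4 : (c ^ k) (b s) ≠ w es := fun h =>
            hdisj k (-j + 1) (by rw [h, co_wes])
          rw [qw5 _ hx1 hx2 hx3 hx4, wapp, ← co_cs, capp]
          refine Or.inr ⟨-k + 1, rfl, ?_⟩
          have h5 : -(-k + 1) = k - 1 := by ring
          rw [h5]
          exact fun hP => hk ((py_step k hk1 hkJ).mpr hP)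
    · by_cases hm0 : m % N = 0
      · have hx : (c ^ m) s = s := by
          rw [fixmod _ hNfixs m, hm0]
          simp
        rw [hx, qw1]
        exact Or.inr ⟨m, hx.symm, hm⟩
      · by_cases hmw : m % N = (-j + 1) % N
        · exfalso
          apply hm
          have h5 : (-m) % N = (j - 1) % N := by
            have h6 := Int.ModEq.neg (show Int.ModEq N m (-j + 1) from hmw)
            rw [show -(-j + 1) = j - 1 by ring] at h6
            exact h6
          exact (py_congr _ _ h5).mpr pyJm1
        · have hx1 : (c ^ m) s ≠ s := fun h =>
            hm0 (((hmods m 0).mp (h.trans co_s.symm)).trans (Int.zero_emod N))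
          have hx2 : (c ^ m) s ≠ es := fun h => hdisj j m (by rw [← co_es, h])
          have hx3 : (c ^ m) s ≠ w s := fun h => hdisj 1 m (by rw [← co_ws, h])
          have hx4 : (c ^ m) s ≠ w es := fun h =>
            hmw ((hmods m (-j + 1)).mp (h.trans co_wes))
          rw [qw5 _ hx1 hx2 hx3 hx4, wapp, co_ws, capp]
          refine Or.inl ⟨-m + 1, rfl, ?_⟩
          intro hP
          have c1 : (-m + 1) % N ≠ 1 := by
            intro h
            apply hm0
            have h6 : ((-m + 1) - 1) % N = ((1 : ℤ) - 1) % N :=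
              Int.ModEq.sub_right 1 (show Int.ModEq N (-m + 1) 1 by
                rw [Int.ModEq, h, hN1])
            rw [show (-m + 1) - 1 = -m by ring, show ((1 : ℤ) - 1) = 0 by ring,
              Int.zero_emod] at h6
            have h7 := Int.ModEq.neg (show Int.ModEq N (-m) 0 by
              rw [Int.ModEq, h6, Int.zero_emod])
            rw [show -(-m) = m by ring, neg_zero] at h7
            rw [Int.ModEq, Int.zero_emod] at h7
            exact h7
          have c2 : (-m + 1) % N ≠ J := by
            intro h
            apply hmw
            have h6 := Int.ModEq.neg (show Int.ModEq N (-m + 1) j by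
              rw [Int.ModEq, h, hJdef])
            rw [show -(-m + 1) = m - 1 by ring] at h6
            have h7 := Int.ModEq.add_right 1 h6
            rw [show m - 1 + 1 = m by ring, show -j + 1 = -j + 1 by ring] at h7
            exact h7
          have h8 := (py_step (-m + 1) c1 c2).mp hP
          rw [show -m + 1 - 1 = -m by ring] at h8
          exact hm h8
  have hAbs : A (b s) := Or.inl ⟨0, co_bs.symm, py0⟩
  have hAws : ¬ A (w s) := by
    rintro (⟨k, hke, hk⟩ | ⟨m, hme, hm⟩)
    · apply hk
      have h5 : k % N = 1 := ((hmod k 1).mp (hke.symm.trans co_ws)).trans hN1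
      exact (py_congr k 1 (by rw [h5, hN1])).mpr py1
    · exact hdisj 1 m (co_ws.symm.trans hme)
  intro hreach
  have hall : ∀ z, Relation.ReflTransGen
      (Stp [removeP b s es, removeP w s es]) (b s) z → A z := by
    intro z hz
    induction hz with
    | refl => exact hAbs
    | tail _ hstep ih =>
        rcases hstep with ⟨f, hf, rfl⟩
        simp only [List.mem_cons, List.not_mem_nil, or_false] at hf
        rcases hf with hf | hf
        · rw [hf]; exact hAinvb _ ih
        · rw [hf]; exact hAinvw _ ih
  exact hAws (hall _ hreach)

end RemoveAux


namespace RemoveAux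

open Relation

variable {b w e : Equiv.Perm α}

lemma rtg_bind {r r' : α → α → Prop} (h : ∀ z y, r z y → ReflTransGen r' z y) :
    ∀ x y, ReflTransGen r x y → ReflTransGen r' x y := by
  intro x y hy
  induction hy with
  | refl => exact .refl
  | tail _ hstep ih => exact ih.trans (h _ _ hstep)

lemma rtg_proj {r r' : α → α → Prop} (f : α → α)
    (h : ∀ z y, r z y → ReflTransGen r' (f z) (f y)) :
    ∀ x y, ReflTransGen r x y → ReflTransGen r' (f x) (f y) := by
  intro x y hy
  induction hy with
  | refl => exact .refl
  | tail _ hstep ih => exact ih.trans (h _ _ hstep)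

lemma rtg_untouched {r r' : α → α → Prop} {s es x : α}
    (hconv : ∀ z y, r z y → z ≠ s → z ≠ es → y ≠ s → y ≠ es → r' z y)
    (hess : ReflTransGen r es s)
    (hxs : ¬ ReflTransGen r x s) :
    ∀ y, ReflTransGen r x y → ReflTransGen r' x y := by
  intro y hy
  induction hy with
  | @tail z y' hz hstep ih =>
      have h1 : z ≠ s := by
        intro h; rw [h] at hz; exact hxs hz
      have h2 : z ≠ es := by
        intro h; rw [h] at hz; exact hxs (hz.trans hess)
      have hzy : ReflTransGen r x y' := hz.tail hstep
      have h3 : y' ≠ s := by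
        intro h; rw [h] at hzy; exact hxs hzy
      have h4 : y' ≠ es := by
        intro h; rw [h] at hzy; exact hxs (hzy.trans hess)
      exact ih.tail (hconv _ _ hstep h1 h2 h3 h4)
  | refl => exact .refl

lemma rtg_cover {r r' : α → α → Prop} {s es t u : α}
    (hconv : ∀ z y, r z y → z ≠ s → z ≠ es → y ≠ s → y ≠ es → r' z y)
    (hs_steps : ∀ y, r s y → y ≠ s → y ≠ es →
      (ReflTransGen r' t y ∨ ReflTransGen r' u y))
    (hes_steps : ∀ y, r es y → y ≠ s → y ≠ es →
      (ReflTransGen r' t y ∨ ReflTransGen r' u y)) :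
    ∀ x, ReflTransGen r s x → x ≠ s → x ≠ es →
      (ReflTransGen r' t x ∨ ReflTransGen r' u x) := by
  intro x hx
  induction hx with
  | refl => intro h; exact absurd rfl h
  | @tail z y hz hstep ih =>
      intro hys hyes
      by_cases hzs : z = s
      · rw [hzs] at hstep
        exact hs_steps y hstep hys hyes
      · by_cases hzes : z = es
        · rw [hzes] at hstep
          exact hes_steps y hstep hys hyes
        · rcases ih hzs hzes with h | h
          · exact Or.inl (h.tail (hconv _ _ hstep hzs hzes hys hyes))
          · exact Or.inr (h.tail (hconv _ _ hstep hzs hzes hys hyes))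

lemma sameFace_refl (b w : Equiv.Perm α) (x : α) : SameFace b w x x :=
  Or.inr ⟨0, by simp⟩

lemma sameFace_equiv (hb : ∀ a, b (b a) = a) (hw : ∀ a, w (w a) = a) :
    Equivalence (SameFace b w) := by
  have hsym : Symmetric (Stp [b, w]) := by
    apply stp_symm
    intro f hf
    simp only [List.mem_cons, List.not_mem_nil, or_false] at hf
    rcases hf with hf | hf
    · rw [hf]; exact hb
    · rw [hf]; exact hw
  refine ⟨sameFace_refl b w, ?_, ?_⟩
  · intro x y h
    rw [sameFace_iff hb hw] at h ⊢
    exact (@ReflTransGen.stdSymm _ _ ⟨fun _ _ h => hsym h⟩).symm _ _ h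
  · intro x y z h1 h2
    rw [sameFace_iff hb hw] at h1 h2 ⊢
    exact h1.trans h2

lemma sameComponent_equiv (b w e : Equiv.Perm α) :
    Equivalence (SameComponent b w e) := by
  refine ⟨fun x => ⟨1, Subgroup.one_mem _, rfl⟩, ?_, ?_⟩
  · rintro x y ⟨g, hg, rfl⟩
    exact ⟨g⁻¹, Subgroup.inv_mem _ hg, Equiv.symm_apply_apply g x⟩
  · rintro x y z ⟨g, hg, rfl⟩ ⟨g', hg', rfl⟩
    exact ⟨g' * g, Subgroup.mul_mem _ hg' hg, rfl⟩

end RemoveAux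

/-- if `E₀ = {s, e s}` is a straight edge of the map `M = (S,b,w,e)`
none of whose extremities is a leaf, then `M \ E₀` has one fewer edge and one more
face than `M`, the same number of vertices, and its number of connected components
either equals that of `M` or exceeds it by `1`; consequently
`d(M \ E₀) ∈ {d(M) - 2, d(M)}`. -/
theorem remove_straight_edge_no_leaf (S : Finset α) (b w e : Equiv.Perm α)
    (hb : IsPairing S b) (hw : IsPairing S w) (he : IsPairing S e)
    (s : α) (hs : s ∈ S)
    (hstraight : IsStraight b w s (e s))
    (hnoblackleaf : b s ≠ e s) (hnowhiteleaf : w s ≠ e s) :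
    numEdges S = numEdges (S \ {s, e s}) + 1 ∧
    numFaces (S \ {s, e s}) (removeP b s (e s)) (removeP w s (e s))
      = numFaces S b w + 1 ∧
    numVertices (S \ {s, e s}) (removeP b s (e s)) (removeP w s (e s))
        (removeP e s (e s)) = numVertices S b w e ∧
    (numComponents (S \ {s, e s}) (removeP b s (e s)) (removeP w s (e s))
        (removeP e s (e s)) = numComponents S b w e ∨
      numComponents (S \ {s, e s}) (removeP b s (e s)) (removeP w s (e s))
        (removeP e s (e s)) = numComponents S b w e + 1) ∧
    (dInv (S \ {s, e s}) (removeP b s (e s)) (removeP w s (e s)) (removeP e s (e s))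
        = dInv S b w e - 2 ∨
      dInv (S \ {s, e s}) (removeP b s (e s)) (removeP w s (e s)) (removeP e s (e s))
        = dInv S b w e) := by
  classical
  have hbi := hb.1
  have hwi := hw.1
  have hei := he.1
  have hesne : e s ≠ s := (he.2 s).mpr hs
  have hses : s ≠ e s := hesne.symm
  have hesS : e s ∈ S := RemoveAux.pairing_mem he hs
  have hbss : b s ≠ s := (hb.2 s).mpr hs
  have hbeses : b (e s) ≠ e s := (hb.2 (e s)).mpr hesS
  have hwss : w s ≠ s := (hw.2 s).mpr hs
  have hweses : w (e s) ≠ e s := (hw.2 (e s)).mpr hesS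
  obtain ⟨qb1, qb2, qb3, qb4, qb5⟩ :=
    RemoveAux.removeP_spec hbi hses hnoblackleaf hbss hbeses
  obtain ⟨qw1, qw2, qw3, qw4, qw5⟩ :=
    RemoveAux.removeP_spec hwi hses hnowhiteleaf hwss hweses
  obtain ⟨qe1, qe2, qe3⟩ := RemoveAux.removeP_edge_spec hei hses
  have hbi' : ∀ a, removeP b s (e s) (removeP b s (e s) a) = a :=
    RemoveAux.removeP_invol hbi hses hnoblackleaf hbss hbeses
  have hwi' : ∀ a, removeP w s (e s) (removeP w s (e s) a) = a :=
    RemoveAux.removeP_invol hwi hses hnowhiteleaf hwss hweses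
  have hei' : ∀ a, removeP e s (e s) (removeP e s (e s) a) = a :=
    RemoveAux.removeP_edge_invol hei hses
  have hbesS : b s ≠ e s := hnoblackleaf
  have hbes_ne_s : b (e s) ≠ s := fun h => hbesS (by rw [← hbi (e s), h])
  have hwes_ne_s : w (e s) ≠ s := fun h => hnowhiteleaf (by rw [← hwi (e s), h])
  have hmemS' : ∀ x, x ∈ S \ {s, e s} ↔ x ∈ S ∧ x ≠ s ∧ x ≠ e s := by
    intro x
    simp only [Finset.mem_sdiff, Finset.mem_insert, Finset.mem_singleton]
    tauto
  have hbsS' : b s ∈ S \ {s, e s} :=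
    (hmemS' _).mpr ⟨RemoveAux.pairing_mem hb hs, hbss, hnoblackleaf⟩
  have hwsS' : w s ∈ S \ {s, e s} :=
    (hmemS' _).mpr ⟨RemoveAux.pairing_mem hw hs, hwss, hnowhiteleaf⟩
  have hsub : S \ {s, e s} ⊆ S := Finset.sdiff_subset
  -- EDGES
  have hE : numEdges S = numEdges (S \ {s, e s}) + 1 := by
    have hsub2 : ({s, e s} : Finset α) ⊆ S := by
      intro x hx
      simp only [Finset.mem_insert, Finset.mem_singleton] at hx
      rcases hx with rfl | rfl
      · exact hs
      · exact hesS
    have hcard2 : ({s, e s} : Finset α).card = 2 := by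
      rw [Finset.card_insert_of_notMem (by simpa using hses), Finset.card_singleton]
    have h1 : (S \ {s, e s}).card = S.card - 2 := by
      rw [Finset.card_sdiff_of_subset hsub2, hcard2]
    have h2 : 2 ≤ S.card := by
      calc 2 = ({s, e s} : Finset α).card := hcard2.symm
        _ ≤ S.card := Finset.card_le_card hsub2
    show S.card / 2 = (S \ {s, e s}).card / 2 + 1
    rw [h1]
    omega
  -- FACES
  have hfaceiff := RemoveAux.sameFace_iff hbi hwi
  have hfaceiff' := RemoveAux.sameFace_iff hbi' hwi'
  have hReq : Equivalence (SameFace b w) := RemoveAux.sameFace_equiv hbi hwi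
  have hReq' : Equivalence (SameFace (removeP b s (e s)) (removeP w s (e s))) :=
    RemoveAux.sameFace_equiv hbi' hwi'
  have hRses : SameFace b w s (e s) := Or.inl hstraight.2
  have hsymF : Symmetric (RemoveAux.Stp [b, w]) := by
    apply RemoveAux.stp_symm
    intro f hf
    simp only [List.mem_cons, List.not_mem_nil, or_false] at hf
    rcases hf with hf | hf
    · rw [hf]; exact hbi
    · rw [hf]; exact hwi
  have hses_rtg : Relation.ReflTransGen (RemoveAux.Stp [b, w]) s (e s) :=
    (hfaceiff s (e s)).mp hRses
  have hes_s_rtg : Relation.ReflTransGen (RemoveAux.Stp [b, w]) (e s) s :=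
    (@Relation.ReflTransGen.stdSymm _ _ ⟨fun _ _ h => hsymF h⟩).symm _ _ hses_rtg
  have hconvF : ∀ z y, RemoveAux.Stp [b, w] z y → z ≠ s → z ≠ e s → y ≠ s →
      y ≠ e s → RemoveAux.Stp [removeP b s (e s), removeP w s (e s)] z y := by
    rintro z y ⟨f, hf, rfl⟩ h1 h2 h3 h4
    simp only [List.mem_cons, List.not_mem_nil, or_false] at hf
    rcases hf with hf | hf
    · rw [hf] at h3 h4 ⊢
      refine ⟨removeP b s (e s), by simp, ?_⟩
      have h5 : z ≠ b s := fun h => h3 (by rw [h, hbi])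
      have h6 : z ≠ b (e s) := fun h => h4 (by rw [h, hbi])
      exact (qb5 z h1 h2 h5 h6).symm
    · rw [hf] at h3 h4 ⊢
      refine ⟨removeP w s (e s), by simp, ?_⟩
      have h5 : z ≠ w s := fun h => h3 (by rw [h, hwi])
      have h6 : z ≠ w (e s) := fun h => h4 (by rw [h, hwi])
      exact (qw5 z h1 h2 h5 h6).symm
  have hconvF' : ∀ z y, RemoveAux.Stp [removeP b s (e s), removeP w s (e s)] z y →
      Relation.ReflTransGen (RemoveAux.Stp [b, w]) z y := by
    rintro z y ⟨f, hf, rfl⟩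
    simp only [List.mem_cons, List.not_mem_nil, or_false] at hf
    rcases hf with hf | hf
    · rw [hf]
      by_cases h1 : z = s
      · rw [h1, qb1]
      · by_cases h2 : z = e s
        · rw [h2, qb2]
        · by_cases h3 : z = b s
          · rw [h3, qb3]
            refine Relation.ReflTransGen.trans
              (Relation.ReflTransGen.single ⟨b, by simp, (hbi s).symm⟩) ?_
            exact hses_rtg.tail ⟨b, by simp, rfl⟩
          · by_cases h4 : z = b (e s)
            · rw [h4, qb4]
              refine Relation.ReflTransGen.trans
                (Relation.ReflTransGen.single ⟨b, by simp, (hbi (e s)).symm⟩) ?_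
              exact hes_s_rtg.tail ⟨b, by simp, rfl⟩
            · rw [qb5 z h1 h2 h3 h4]
              exact Relation.ReflTransGen.single ⟨b, by simp, rfl⟩
    · rw [hf]
      by_cases h1 : z = s
      · rw [h1, qw1]
      · by_cases h2 : z = e s
        · rw [h2, qw2]
        · by_cases h3 : z = w s
          · rw [h3, qw3]
            refine Relation.ReflTransGen.trans
              (Relation.ReflTransGen.single ⟨w, by simp, (hwi s).symm⟩) ?_
            exact hses_rtg.tail ⟨w, by simp, rfl⟩
          · by_cases h4 : z = w (e s)
            · rw [h4, qw4]
              refine Relation.ReflTransGen.trans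
                (Relation.ReflTransGen.single ⟨w, by simp, (hwi (e s)).symm⟩) ?_
              exact hes_s_rtg.tail ⟨w, by simp, rfl⟩
            · rw [qw5 z h1 h2 h3 h4]
              exact Relation.ReflTransGen.single ⟨w, by simp, rfl⟩
  have hFaces : numFaces (S \ {s, e s}) (removeP b s (e s)) (removeP w s (e s))
      = numFaces S b w + 1 := by
    have hnot : ¬ SameFace (removeP b s (e s)) (removeP w s (e s)) (b s) (w s) := by
      rw [hfaceiff']
      exact RemoveAux.face_sep hb hw hs hesS hstraight.2 hnoblackleaf hnowhiteleaf
        hses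
    have hsplit := RemoveAux.split_count (S \ {s, e s}) S hReq hReq' s hs hsub
      (by
        intro x hx hx'
        by_cases h1 : x = s
        · rw [h1]; exact hReq.refl s
        · by_cases h2 : x = e s
          · rw [h2]; exact hReq.symm hRses
          · exact absurd ((hmemS' x).mpr ⟨hx, h1, h2⟩) hx')
      (b s) (w s) hbsS' hwsS'
      (Or.inl ⟨0, by simp⟩)
      (Or.inl ⟨1, by simp [Equiv.Perm.mul_apply, hbi]⟩)
      (by
        intro x _ y _ h
        rw [hfaceiff'] at h
        rw [hfaceiff]
        exact RemoveAux.rtg_bind hconvF' x y h)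
      (by
        intro x hx y hy hxs hxy
        rw [hfaceiff']
        exact RemoveAux.rtg_untouched hconvF hes_s_rtg
          (fun hc => hxs ((hfaceiff x s).mpr hc)) y ((hfaceiff x y).mp hxy))
      (by
        intro x hx hxR
        obtain ⟨hxS, hx1, hx2⟩ := (hmemS' x).mp hx
        have hsx : Relation.ReflTransGen (RemoveAux.Stp [b, w]) s x :=
          (hfaceiff s x).mp (hReq.symm hxR)
        have hcv := RemoveAux.rtg_cover hconvF
          (by
            rintro y ⟨f, hf, rfl⟩ _ _
            simp only [List.mem_cons, List.not_mem_nil, or_false] at hf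
            rcases hf with hf | hf
            · rw [hf]; exact Or.inl .refl
            · rw [hf]; exact Or.inr .refl)
          (by
            rintro y ⟨f, hf, rfl⟩ hys hyes
            simp only [List.mem_cons, List.not_mem_nil, or_false] at hf
            rcases hf with hf | hf
            · rw [hf]
              exact Or.inl (Relation.ReflTransGen.single
                ⟨removeP b s (e s), by simp, qb3.symm⟩)
            · rw [hf]
              exact Or.inr (Relation.ReflTransGen.single
                ⟨removeP w s (e s), by simp, qw3.symm⟩))
          x hsx hx1 hx2
        rcases hcv with h | h
        · exact Or.inl ((hfaceiff' _ _).mpr h)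
        · exact Or.inr ((hfaceiff' _ _).mpr h))
    rw [if_neg hnot] at hsplit
    exact hsplit
  -- BLACK VERTICES
  have hviff := RemoveAux.sameFace_iff hbi hei
  have hviff' := RemoveAux.sameFace_iff hbi' hei'
  have hVeq : Equivalence (SameFace b e) := RemoveAux.sameFace_equiv hbi hei
  have hVeq' : Equivalence (SameFace (removeP b s (e s)) (removeP e s (e s))) :=
    RemoveAux.sameFace_equiv hbi' hei'
  have hRses_v : SameFace b e s (e s) :=
    Or.inl ⟨1, by simp [Equiv.Perm.mul_apply, hbi]⟩
  set fb : α → α := fun x => if x = s then b s else if x = e s then b (e s) else x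
    with hfb
  have fb_s : fb s = b s := by rw [hfb]; simp
  have fb_es : fb (e s) = b (e s) := by rw [hfb]; simp [hesne]
  have fb_other : ∀ x, x ≠ s → x ≠ e s → fb x = x := by
    intro x h1 h2; rw [hfb]; simp [h1, h2]
  have hprojb : ∀ z y, RemoveAux.Stp [b, e] z y →
      Relation.ReflTransGen
        (RemoveAux.Stp [removeP b s (e s), removeP e s (e s)]) (fb z) (fb y) := by
    rintro z y ⟨f, hf, rfl⟩
    simp only [List.mem_cons, List.not_mem_nil, or_false] at hf
    rcases hf with hf | hf
    · rw [hf]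
      by_cases h1 : z = s
      · rw [h1, fb_s, fb_other (b s) hbss hnoblackleaf]
      · by_cases h2 : z = e s
        · rw [h2, fb_es, fb_other (b (e s)) hbes_ne_s hbeses]
        · rw [fb_other z h1 h2]
          by_cases h3 : b z = s
          · have h5 : z = b s := by rw [← h3, hbi]
            rw [h3, fb_s, h5]
          · by_cases h4 : b z = e s
            · have h5 : z = b (e s) := by rw [← h4, hbi]
              rw [h4, fb_es, h5]
            · rw [fb_other (b z) h3 h4]
              have h5 : z ≠ b s := fun h => h3 (by rw [h, hbi])
              have h6 : z ≠ b (e s) := fun h => h4 (by rw [h, hbi])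
              exact Relation.ReflTransGen.single
                ⟨removeP b s (e s), by simp, (qb5 z h1 h2 h5 h6).symm⟩
    · rw [hf]
      by_cases h1 : z = s
      · rw [h1, fb_s, fb_es]
        exact Relation.ReflTransGen.single ⟨removeP b s (e s), by simp, qb3.symm⟩
      · by_cases h2 : z = e s
        · rw [h2, fb_es, hei, fb_s]
          exact Relation.ReflTransGen.single ⟨removeP b s (e s), by simp, qb4.symm⟩
        · have h3 : e z ≠ s := fun h => h2 (by rw [← hei z, h])
          have h4 : e z ≠ e s := fun h => h1 (e.injective h)
          rw [fb_other z h1 h2, fb_other (e z) h3 h4]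
          exact Relation.ReflTransGen.single
            ⟨removeP e s (e s), by simp, (qe3 z h1 h2).symm⟩
  have hconvV' : ∀ z y,
      RemoveAux.Stp [removeP b s (e s), removeP e s (e s)] z y →
      Relation.ReflTransGen (RemoveAux.Stp [b, e]) z y := by
    rintro z y ⟨f, hf, rfl⟩
    simp only [List.mem_cons, List.not_mem_nil, or_false] at hf
    rcases hf with hf | hf
    · rw [hf]
      by_cases h1 : z = s
      · rw [h1, qb1]
      · by_cases h2 : z = e s
        · rw [h2, qb2]
        · by_cases h3 : z = b s
          · rw [h3, qb3]
            exact ((Relation.ReflTransGen.single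
              ⟨b, by simp, (hbi s).symm⟩).tail ⟨e, by simp, rfl⟩).tail
              ⟨b, by simp, rfl⟩
          · by_cases h4 : z = b (e s)
            · rw [h4, qb4]
              exact ((Relation.ReflTransGen.single
                ⟨b, by simp, (hbi (e s)).symm⟩).tail
                ⟨e, by simp, (hei s).symm⟩).tail ⟨b, by simp, rfl⟩
            · rw [qb5 z h1 h2 h3 h4]
              exact Relation.ReflTransGen.single ⟨b, by simp, rfl⟩
    · rw [hf]
      by_cases h1 : z = s
      · rw [h1, qe1]
      · by_cases h2 : z = e s
        · rw [h2, qe2]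
        · rw [qe3 z h1 h2]
          exact Relation.ReflTransGen.single ⟨e, by simp, rfl⟩
  have hVb : numFaces (S \ {s, e s}) (removeP b s (e s)) (removeP e s (e s))
      = numFaces S b e := by
    have hsplit := RemoveAux.split_count (S \ {s, e s}) S hVeq hVeq' s hs hsub
      (by
        intro x hx hx'
        by_cases h1 : x = s
        · rw [h1]; exact hVeq.refl s
        · by_cases h2 : x = e s
          · rw [h2]; exact hVeq.symm hRses_v
          · exact absurd ((hmemS' x).mpr ⟨hx, h1, h2⟩) hx')
      (b s) (b s) hbsS' hbsS'
      (Or.inl ⟨0, by simp⟩) (Or.inl ⟨0, by simp⟩)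
      (by
        intro x _ y _ h
        rw [hviff'] at h
        rw [hviff]
        exact RemoveAux.rtg_bind hconvV' x y h)
      (by
        intro x hx y hy _ hxy
        obtain ⟨_, hx1, hx2⟩ := (hmemS' x).mp hx
        obtain ⟨_, hy1, hy2⟩ := (hmemS' y).mp hy
        have h := RemoveAux.rtg_proj fb hprojb x y ((hviff x y).mp hxy)
        rw [fb_other x hx1 hx2, fb_other y hy1 hy2] at h
        exact (hviff' x y).mpr h)
      (by
        intro x hx hxR
        obtain ⟨_, hx1, hx2⟩ := (hmemS' x).mp hx
        have h := RemoveAux.rtg_proj fb hprojb s x ((hviff s x).mp (hVeq.symm hxR))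
        rw [fb_s, fb_other x hx1 hx2] at h
        exact Or.inl ((hviff' _ _).mpr h))
    rw [if_pos (hVeq'.refl (b s)), add_zero] at hsplit
    exact hsplit
  -- WHITE VERTICES
  have hviffw := RemoveAux.sameFace_iff hwi hei
  have hviffw' := RemoveAux.sameFace_iff hwi' hei'
  have hWeq : Equivalence (SameFace w e) := RemoveAux.sameFace_equiv hwi hei
  have hWeq' : Equivalence (SameFace (removeP w s (e s)) (removeP e s (e s))) :=
    RemoveAux.sameFace_equiv hwi' hei'
  have hRses_w : SameFace w e s (e s) :=
    Or.inl ⟨1, by simp [Equiv.Perm.mul_apply, hwi]⟩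
  set fw : α → α := fun x => if x = s then w s else if x = e s then w (e s) else x
    with hfw
  have fw_s : fw s = w s := by rw [hfw]; simp
  have fw_es : fw (e s) = w (e s) := by rw [hfw]; simp [hesne]
  have fw_other : ∀ x, x ≠ s → x ≠ e s → fw x = x := by
    intro x h1 h2; rw [hfw]; simp [h1, h2]
  have hprojw : ∀ z y, RemoveAux.Stp [w, e] z y →
      Relation.ReflTransGen
        (RemoveAux.Stp [removeP w s (e s), removeP e s (e s)]) (fw z) (fw y) := by
    rintro z y ⟨f, hf, rfl⟩
    simp only [List.mem_cons, List.not_mem_nil, or_false] at hf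
    rcases hf with hf | hf
    · rw [hf]
      by_cases h1 : z = s
      · rw [h1, fw_s, fw_other (w s) hwss hnowhiteleaf]
      · by_cases h2 : z = e s
        · rw [h2, fw_es, fw_other (w (e s)) hwes_ne_s hweses]
        · rw [fw_other z h1 h2]
          by_cases h3 : w z = s
          · have h5 : z = w s := by rw [← h3, hwi]
            rw [h3, fw_s, h5]
          · by_cases h4 : w z = e s
            · have h5 : z = w (e s) := by rw [← h4, hwi]
              rw [h4, fw_es, h5]
            · rw [fw_other (w z) h3 h4]
              have h5 : z ≠ w s := fun h => h3 (by rw [h, hwi])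
              have h6 : z ≠ w (e s) := fun h => h4 (by rw [h, hwi])
              exact Relation.ReflTransGen.single
                ⟨removeP w s (e s), by simp, (qw5 z h1 h2 h5 h6).symm⟩
    · rw [hf]
      by_cases h1 : z = s
      · rw [h1, fw_s, fw_es]
        exact Relation.ReflTransGen.single ⟨removeP w s (e s), by simp, qw3.symm⟩
      · by_cases h2 : z = e s
        · rw [h2, fw_es, hei, fw_s]
          exact Relation.ReflTransGen.single ⟨removeP w s (e s), by simp, qw4.symm⟩
        · have h3 : e z ≠ s := fun h => h2 (by rw [← hei z, h])
          have h4 : e z ≠ e s := fun h => h1 (e.injective h)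
          rw [fw_other z h1 h2, fw_other (e z) h3 h4]
          exact Relation.ReflTransGen.single
            ⟨removeP e s (e s), by simp, (qe3 z h1 h2).symm⟩
  have hconvW' : ∀ z y,
      RemoveAux.Stp [removeP w s (e s), removeP e s (e s)] z y →
      Relation.ReflTransGen (RemoveAux.Stp [w, e]) z y := by
    rintro z y ⟨f, hf, rfl⟩
    simp only [List.mem_cons, List.not_mem_nil, or_false] at hf
    rcases hf with hf | hf
    · rw [hf]
      by_cases h1 : z = s
      · rw [h1, qw1]
      · by_cases h2 : z = e s
        · rw [h2, qw2]
        · by_cases h3 : z = w s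
          · rw [h3, qw3]
            exact ((Relation.ReflTransGen.single
              ⟨w, by simp, (hwi s).symm⟩).tail ⟨e, by simp, rfl⟩).tail
              ⟨w, by simp, rfl⟩
          · by_cases h4 : z = w (e s)
            · rw [h4, qw4]
              exact ((Relation.ReflTransGen.single
                ⟨w, by simp, (hwi (e s)).symm⟩).tail
                ⟨e, by simp, (hei s).symm⟩).tail ⟨w, by simp, rfl⟩
            · rw [qw5 z h1 h2 h3 h4]
              exact Relation.ReflTransGen.single ⟨w, by simp, rfl⟩
    · rw [hf]
      by_cases h1 : z = s
      · rw [h1, qe1]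
      · by_cases h2 : z = e s
        · rw [h2, qe2]
        · rw [qe3 z h1 h2]
          exact Relation.ReflTransGen.single ⟨e, by simp, rfl⟩
  have hVw : numFaces (S \ {s, e s}) (removeP w s (e s)) (removeP e s (e s))
      = numFaces S w e := by
    have hsplit := RemoveAux.split_count (S \ {s, e s}) S hWeq hWeq' s hs hsub
      (by
        intro x hx hx'
        by_cases h1 : x = s
        · rw [h1]; exact hWeq.refl s
        · by_cases h2 : x = e s
          · rw [h2]; exact hWeq.symm hRses_w
          · exact absurd ((hmemS' x).mpr ⟨hx, h1, h2⟩) hx')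
      (w s) (w s) hwsS' hwsS'
      (Or.inl ⟨0, by simp⟩) (Or.inl ⟨0, by simp⟩)
      (by
        intro x _ y _ h
        rw [hviffw'] at h
        rw [hviffw]
        exact RemoveAux.rtg_bind hconvW' x y h)
      (by
        intro x hx y hy _ hxy
        obtain ⟨_, hx1, hx2⟩ := (hmemS' x).mp hx
        obtain ⟨_, hy1, hy2⟩ := (hmemS' y).mp hy
        have h := RemoveAux.rtg_proj fw hprojw x y ((hviffw x y).mp hxy)
        rw [fw_other x hx1 hx2, fw_other y hy1 hy2] at h
        exact (hviffw' x y).mpr h)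
      (by
        intro x hx hxR
        obtain ⟨_, hx1, hx2⟩ := (hmemS' x).mp hx
        have h := RemoveAux.rtg_proj fw hprojw s x ((hviffw s x).mp (hWeq.symm hxR))
        rw [fw_s, fw_other x hx1 hx2] at h
        exact Or.inl ((hviffw' _ _).mpr h))
    rw [if_pos (hWeq'.refl (w s)), add_zero] at hsplit
    exact hsplit
  have hV : numVertices (S \ {s, e s}) (removeP b s (e s)) (removeP w s (e s))
      (removeP e s (e s)) = numVertices S b w e := by
    show numFaces (S \ {s, e s}) (removeP b s (e s)) (removeP e s (e s)) +
        numFaces (S \ {s, e s}) (removeP w s (e s)) (removeP e s (e s))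
      = numFaces S b e + numFaces S w e
    rw [hVb, hVw]
  -- COMPONENTS
  have hciff := RemoveAux.sameComponent_iff hbi hwi hei
  have hciff' := RemoveAux.sameComponent_iff hbi' hwi' hei'
  have hCeq : Equivalence (SameComponent b w e) := RemoveAux.sameComponent_equiv b w e
  have hCeq' := RemoveAux.sameComponent_equiv (removeP b s (e s)) (removeP w s (e s))
    (removeP e s (e s))
  have hconvC : ∀ z y, RemoveAux.Stp [b, w, e] z y → z ≠ s → z ≠ e s → y ≠ s →
      y ≠ e s →
      RemoveAux.Stp [removeP b s (e s), removeP w s (e s), removeP e s (e s)] z y := by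
    rintro z y ⟨f, hf, rfl⟩ h1 h2 h3 h4
    simp only [List.mem_cons, List.not_mem_nil, or_false] at hf
    rcases hf with hf | hf | hf
    · rw [hf] at h3 h4 ⊢
      refine ⟨removeP b s (e s), by simp, ?_⟩
      have h5 : z ≠ b s := fun h => h3 (by rw [h, hbi])
      have h6 : z ≠ b (e s) := fun h => h4 (by rw [h, hbi])
      exact (qb5 z h1 h2 h5 h6).symm
    · rw [hf] at h3 h4 ⊢
      refine ⟨removeP w s (e s), by simp, ?_⟩
      have h5 : z ≠ w s := fun h => h3 (by rw [h, hwi])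
      have h6 : z ≠ w (e s) := fun h => h4 (by rw [h, hwi])
      exact (qw5 z h1 h2 h5 h6).symm
    · rw [hf]
      exact ⟨removeP e s (e s), by simp, (qe3 z h1 h2).symm⟩
  have hconvC' : ∀ z y,
      RemoveAux.Stp [removeP b s (e s), removeP w s (e s), removeP e s (e s)] z y →
      Relation.ReflTransGen (RemoveAux.Stp [b, w, e]) z y := by
    rintro z y ⟨f, hf, rfl⟩
    simp only [List.mem_cons, List.not_mem_nil, or_false] at hf
    rcases hf with hf | hf | hf
    · rw [hf]
      by_cases h1 : z = s
      · rw [h1, qb1]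
      · by_cases h2 : z = e s
        · rw [h2, qb2]
        · by_cases h3 : z = b s
          · rw [h3, qb3]
            exact ((Relation.ReflTransGen.single
              ⟨b, by simp, (hbi s).symm⟩).tail ⟨e, by simp, rfl⟩).tail
              ⟨b, by simp, rfl⟩
          · by_cases h4 : z = b (e s)
            · rw [h4, qb4]
              exact ((Relation.ReflTransGen.single
                ⟨b, by simp, (hbi (e s)).symm⟩).tail
                ⟨e, by simp, (hei s).symm⟩).tail ⟨b, by simp, rfl⟩
            · rw [qb5 z h1 h2 h3 h4]
              exact Relation.ReflTransGen.single ⟨b, by simp, rfl⟩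
    · rw [hf]
      by_cases h1 : z = s
      · rw [h1, qw1]
      · by_cases h2 : z = e s
        · rw [h2, qw2]
        · by_cases h3 : z = w s
          · rw [h3, qw3]
            exact ((Relation.ReflTransGen.single
              ⟨w, by simp, (hwi s).symm⟩).tail ⟨e, by simp, rfl⟩).tail
              ⟨w, by simp, rfl⟩
          · by_cases h4 : z = w (e s)
            · rw [h4, qw4]
              exact ((Relation.ReflTransGen.single
                ⟨w, by simp, (hwi (e s)).symm⟩).tail
                ⟨e, by simp, (hei s).symm⟩).tail ⟨w, by simp, rfl⟩
            · rw [qw5 z h1 h2 h3 h4]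
              exact Relation.ReflTransGen.single ⟨w, by simp, rfl⟩
    · rw [hf]
      by_cases h1 : z = s
      · rw [h1, qe1]
      · by_cases h2 : z = e s
        · rw [h2, qe2]
        · rw [qe3 z h1 h2]
          exact Relation.ReflTransGen.single ⟨e, by simp, rfl⟩
  have hes_s_rtgC : Relation.ReflTransGen (RemoveAux.Stp [b, w, e]) (e s) s :=
    Relation.ReflTransGen.single ⟨e, by simp, (hei s).symm⟩
  have hCsplit := RemoveAux.split_count (S \ {s, e s}) S hCeq hCeq' s hs hsub
    (by
      intro x hx hx'
      by_cases h1 : x = s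
      · rw [h1]; exact hCeq.refl s
      · by_cases h2 : x = e s
        · rw [h2]
          exact hCeq.symm ⟨e, Subgroup.subset_closure (by simp), rfl⟩
        · exact absurd ((hmemS' x).mpr ⟨hx, h1, h2⟩) hx')
    (b s) (w s) hbsS' hwsS'
    ⟨b, Subgroup.subset_closure (by simp), rfl⟩
    ⟨w, Subgroup.subset_closure (by simp), rfl⟩
    (by
      intro x _ y _ h
      rw [hciff'] at h
      rw [hciff]
      exact RemoveAux.rtg_bind hconvC' x y h)
    (by
      intro x hx y hy hxs hxy
      rw [hciff']
      exact RemoveAux.rtg_untouched hconvC hes_s_rtgC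
        (fun hc => hxs ((hciff x s).mpr hc)) y ((hciff x y).mp hxy))
    (by
      intro x hx hxR
      obtain ⟨hxS, hx1, hx2⟩ := (hmemS' x).mp hx
      have hsx : Relation.ReflTransGen (RemoveAux.Stp [b, w, e]) s x :=
        (hciff s x).mp (hCeq.symm hxR)
      have hcv := RemoveAux.rtg_cover hconvC
        (by
          rintro y ⟨f, hf, rfl⟩ hys hyes
          simp only [List.mem_cons, List.not_mem_nil, or_false] at hf
          rcases hf with hf | hf | hf
          · rw [hf]; exact Or.inl .refl
          · rw [hf]; exact Or.inr .refl
          · rw [hf] at hyes ⊢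
            exact absurd rfl hyes)
        (by
          rintro y ⟨f, hf, rfl⟩ hys hyes
          simp only [List.mem_cons, List.not_mem_nil, or_false] at hf
          rcases hf with hf | hf | hf
          · rw [hf]
            exact Or.inl (Relation.ReflTransGen.single
              ⟨removeP b s (e s), by simp, qb3.symm⟩)
          · rw [hf]
            exact Or.inr (Relation.ReflTransGen.single
              ⟨removeP w s (e s), by simp, qw3.symm⟩)
          · rw [hf] at hys ⊢
            exact absurd (hei s) hys)
        x hsx hx1 hx2
      rcases hcv with h | h
      · exact Or.inl ((hciff' _ _).mpr h)
      · exact Or.inr ((hciff' _ _).mpr h))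
  have hC : numComponents (S \ {s, e s}) (removeP b s (e s)) (removeP w s (e s))
        (removeP e s (e s)) = numComponents S b w e ∨
      numComponents (S \ {s, e s}) (removeP b s (e s)) (removeP w s (e s))
        (removeP e s (e s)) = numComponents S b w e + 1 := by
    by_cases hcc : SameComponent (removeP b s (e s)) (removeP w s (e s))
        (removeP e s (e s)) (b s) (w s)
    · left
      rw [if_pos hcc, add_zero] at hCsplit
      exact hCsplit
    · right
      rw [if_neg hcc] at hCsplit
      exact hCsplit
  refine ⟨hE, hFaces, hV, hC, ?_⟩
  rcases hC with h | h
  · left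
    simp only [dInv, eulerChar, hV, hFaces, h, hE]
    push_cast
    ring
  · right
    simp only [dInv, eulerChar, hV, hFaces, h, hE]
    push_cast
    ring


end
end
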